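/- arXiv:math/0009215 — 5 statements merged into one kernel-verified Lean document; each statement's English description precedes it below -/
import Mathlib

section
/- Let D₁, D₂ ⊆ ℂ be domains. If at least one of D₁, D₂ is biholomorphic to ℂ∗ := ℂ \ {0}, then the Hahn and Kobayashi–Royden pseudometrics of the product coincide: h_{D₁×D₂}(z;X) = κ_{D₁×D₂}(z;X) for all z ∈ D₁×D₂ and X ∈ ℂ². -/
open Set Metric Complex

noncomputable section

/-- The open unit disc `E` in `ℂ`. -/
def unitDisc : Set ℂ := Metric.ball (0 : ℂ) 1

/-- The Kobayashi–Royden pseudometric of a set `D` in a complex normed space: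
`κ_D(z;X) = inf {|α| : ∃ holomorphic f : E → D, f(0) = z, α·f'(0) = X}`. -/
def kobayashi {V : Type*} [NormedAddCommGroup V] [NormedSpace ℂ V]
    (D : Set V) (z X : V) : ℝ :=
  sInf {r : ℝ | ∃ (α : ℂ) (f : ℂ → V), ‖α‖ = r ∧
    DifferentiableOn ℂ f unitDisc ∧ MapsTo f unitDisc D ∧
    f 0 = z ∧ α • deriv f 0 = X}

/-- The Hahn pseudometric of a set `D` in a complex normed space:
`h_D(z;X) = inf {|α| : ∃ injective holomorphic f : E → D, f(0) = z, α·f'(0) = X}`. -/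
def hahn {V : Type*} [NormedAddCommGroup V] [NormedSpace ℂ V]
    (D : Set V) (z X : V) : ℝ :=
  sInf {r : ℝ | ∃ (α : ℂ) (f : ℂ → V), ‖α‖ = r ∧
    DifferentiableOn ℂ f unitDisc ∧ MapsTo f unitDisc D ∧ InjOn f unitDisc ∧
    f 0 = z ∧ α • deriv f 0 = X}

/-- `D₁` is biholomorphic to `D₂`: there is a holomorphic bijection `f : D₁ → D₂`
with holomorphic inverse. -/
def Biholomorphic (D₁ D₂ : Set ℂ) : Prop :=
  ∃ f g : ℂ → ℂ, DifferentiableOn ℂ f D₁ ∧ DifferentiableOn ℂ g D₂ ∧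
    MapsTo f D₁ D₂ ∧ MapsTo g D₂ D₁ ∧
    (∀ z ∈ D₁, g (f z) = z) ∧ (∀ w ∈ D₂, f (g w) = w)

set_option maxHeartbeats 1000000

namespace AuxHK

def KSet (D : Set (ℂ × ℂ)) (z X : ℂ × ℂ) : Set ℝ :=
  {r : ℝ | ∃ (α : ℂ) (f : ℂ → ℂ × ℂ), ‖α‖ = r ∧
    DifferentiableOn ℂ f unitDisc ∧ MapsTo f unitDisc D ∧
    f 0 = z ∧ α • deriv f 0 = X}

def HSet (D : Set (ℂ × ℂ)) (z X : ℂ × ℂ) : Set ℝ :=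
  {r : ℝ | ∃ (α : ℂ) (f : ℂ → ℂ × ℂ), ‖α‖ = r ∧
    DifferentiableOn ℂ f unitDisc ∧ MapsTo f unitDisc D ∧ InjOn f unitDisc ∧
    f 0 = z ∧ α • deriv f 0 = X}

lemma kobayashi_eq_KSet (D : Set (ℂ × ℂ)) (z X : ℂ × ℂ) :
    kobayashi D z X = sInf (KSet D z X) := rfl

lemma hahn_eq_HSet (D : Set (ℂ × ℂ)) (z X : ℂ × ℂ) :
    hahn D z X = sInf (HSet D z X) := rfl

lemma HSet_subset_KSet {D : Set (ℂ × ℂ)} {z X : ℂ × ℂ} : HSet D z X ⊆ KSet D z X := by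
  rintro r ⟨α, f, h1, h2, h3, _, h5, h6⟩
  exact ⟨α, f, h1, h2, h3, h5, h6⟩

lemma KSet_nonneg {D : Set (ℂ × ℂ)} {z X : ℂ × ℂ} {r : ℝ} (hr : r ∈ KSet D z X) : 0 ≤ r := by
  obtain ⟨α, f, h1, -⟩ := hr
  exact h1 ▸ norm_nonneg α

lemma KSet_bddBelow (D : Set (ℂ × ℂ)) (z X : ℂ × ℂ) : BddBelow (KSet D z X) :=
  ⟨0, fun _ hr => KSet_nonneg hr⟩

lemma HSet_bddBelow (D : Set (ℂ × ℂ)) (z X : ℂ × ℂ) : BddBelow (HSet D z X) :=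
  ⟨0, fun _ hr => KSet_nonneg (HSet_subset_KSet hr)⟩

lemma isOpen_unitDisc : IsOpen unitDisc := Metric.isOpen_ball

lemma zero_mem_unitDisc : (0 : ℂ) ∈ unitDisc := Metric.mem_ball_self one_pos

lemma abs_lt_one_of_mem {a : ℂ} (ha : a ∈ unitDisc) : ‖a‖ < 1 := by
  simpa [unitDisc, Metric.mem_ball, Complex.dist_eq] using ha

lemma hasDerivAt_zero_of_diffOn {V : Type*} [NormedAddCommGroup V] [NormedSpace ℂ V]
    {f : ℂ → V} (hf : DifferentiableOn ℂ f unitDisc) : HasDerivAt f (deriv f 0) 0 :=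
  (hf.differentiableAt (isOpen_unitDisc.mem_nhds zero_mem_unitDisc)).hasDerivAt


lemma zero_mem_HSet {D₁ D₂ : Set ℂ} {z₁ z₂ : ℂ} {δ₁ : ℝ} (hδ₁pos : 0 < δ₁)
    (hδ₁ : Metric.ball z₁ δ₁ ⊆ D₁) (hz₂ : z₂ ∈ D₂) :
    (0 : ℝ) ∈ HSet (D₁ ×ˢ D₂) (z₁, z₂) 0 := by
  refine ⟨0, fun w => (z₁ + (δ₁ : ℂ) * w, z₂), by simp, ?_, ?_, ?_, by simp, by simp⟩
  · apply DifferentiableOn.prodMk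
    · exact ((differentiable_const _).add ((differentiable_id).const_mul _)).differentiableOn
    · exact (differentiable_const _).differentiableOn
  · intro w hw
    refine ⟨hδ₁ ?_, hz₂⟩
    have : ‖((δ₁ : ℂ) * w)‖ < δ₁ := by
      rw [norm_mul, Complex.norm_real, Real.norm_eq_abs, abs_of_pos hδ₁pos]
      nlinarith [abs_lt_one_of_mem hw, norm_nonneg w]
    simpa [Metric.mem_ball, Complex.dist_eq] using this
  · intro a _ b _ hab
    have h1 : z₁ + (δ₁ : ℂ) * a = z₁ + (δ₁ : ℂ) * b := congrArg Prod.fst hab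
    have hδ : (δ₁ : ℂ) ≠ 0 := Complex.ofReal_ne_zero.mpr hδ₁pos.ne'
    have := add_left_cancel h1
    exact mul_left_cancel₀ hδ this

lemma HSet_nonempty {D₁ D₂ : Set ℂ} (h₁ : IsOpen D₁) (h₂ : IsOpen D₂) {z₁ z₂ : ℂ}
    (hz₁ : z₁ ∈ D₁) (hz₂ : z₂ ∈ D₂) (X : ℂ × ℂ) :
    (HSet (D₁ ×ˢ D₂) (z₁, z₂) X).Nonempty := by
  obtain ⟨δ₁, hδ₁pos, hδ₁⟩ := Metric.isOpen_iff.mp h₁ z₁ hz₁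
  obtain ⟨δ₂, hδ₂pos, hδ₂⟩ := Metric.isOpen_iff.mp h₂ z₂ hz₂
  by_cases hX : X = 0
  · exact ⟨0, hX ▸ zero_mem_HSet hδ₁pos hδ₁ hz₂⟩
  · set S : ℝ := ‖X.1‖ + ‖X.2‖ + 1 with hSdef
    have hSpos : 0 < S := by positivity
    set τ : ℝ := min δ₁ δ₂ / S with hτdef
    have hτpos : 0 < τ := by
      apply div_pos (lt_min hδ₁pos hδ₂pos) hSpos
    have hτC : (τ : ℂ) ≠ 0 := Complex.ofReal_ne_zero.mpr hτpos.ne'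
    set f : ℂ → ℂ × ℂ := fun w => (z₁ + ((τ : ℂ) * X.1) * w, z₂ + ((τ : ℂ) * X.2) * w) with hfdef
    have key : ∀ (c : ℝ) (Y w : ℂ), c ∈ Set.Icc 0 τ → ‖w‖ < 1 →
        ‖(((c : ℂ) * Y) * w)‖ ≤ τ * ‖Y‖ := by
      intro c Y w hc hw
      rw [norm_mul, norm_mul, Complex.norm_real, Real.norm_eq_abs, _root_.abs_of_nonneg hc.1]
      have h1 : ‖Y‖ * ‖w‖ ≤ ‖Y‖ * 1 := by
        apply mul_le_mul_of_nonneg_left hw.le (norm_nonneg Y)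
      nlinarith [norm_nonneg Y, hc.2, norm_nonneg w,
        mul_le_mul_of_nonneg_right hc.2 (mul_nonneg (norm_nonneg Y) (norm_nonneg w))]
    have hbound : ∀ i : Fin 2, True := fun _ => trivial
    have hτX1 : τ * ‖X.1‖ < min δ₁ δ₂ := by
      rw [hτdef]
      rw [div_mul_eq_mul_div, mul_comm]
      rw [div_lt_iff₀ hSpos]
      have : ‖X.1‖ < S := by simp [hSdef]; nlinarith [norm_nonneg X.2]
      nlinarith [lt_min hδ₁pos hδ₂pos]
    have hτX2 : τ * ‖X.2‖ < min δ₁ δ₂ := by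
      rw [hτdef, div_mul_eq_mul_div, mul_comm, div_lt_iff₀ hSpos]
      have : ‖X.2‖ < S := by simp [hSdef]; nlinarith [norm_nonneg X.1]
      nlinarith [lt_min hδ₁pos hδ₂pos]
    refine ⟨‖((τ : ℂ))⁻¹‖, (τ : ℂ)⁻¹, f, rfl, ?_, ?_, ?_, by simp [hfdef], ?_⟩
    · apply DifferentiableOn.prodMk <;>
        exact ((differentiable_const _).add ((differentiable_id).const_mul _)).differentiableOn
    · intro w hw
      have hw1 := abs_lt_one_of_mem hw
      constructor
      · apply hδ₁
        have := key τ X.1 w ⟨hτpos.le, le_refl τ⟩ hw1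
        simp only [Metric.mem_ball, Complex.dist_eq, hfdef]
        have h2 : z₁ + (τ : ℂ) * X.1 * w - z₁ = (τ : ℂ) * X.1 * w := by ring
        rw [h2]
        exact lt_of_le_of_lt this (lt_of_lt_of_le hτX1 (min_le_left _ _))
      · apply hδ₂
        have := key τ X.2 w ⟨hτpos.le, le_refl τ⟩ hw1
        simp only [Metric.mem_ball, Complex.dist_eq, hfdef]
        have h2 : z₂ + (τ : ℂ) * X.2 * w - z₂ = (τ : ℂ) * X.2 * w := by ring
        rw [h2]
        exact lt_of_le_of_lt this (lt_of_lt_of_le hτX2 (min_le_right _ _))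
    · intro a _ b _ hab
      by_contra hne
      have hsub : a - b ≠ 0 := sub_ne_zero.mpr hne
      have h1 : z₁ + (τ : ℂ) * X.1 * a = z₁ + (τ : ℂ) * X.1 * b := congrArg Prod.fst hab
      have h2 : z₂ + (τ : ℂ) * X.2 * a = z₂ + (τ : ℂ) * X.2 * b := congrArg Prod.snd hab
      have e1 : (τ : ℂ) * X.1 * (a - b) = 0 := by linear_combination h1
      have e2 : (τ : ℂ) * X.2 * (a - b) = 0 := by linear_combination h2
      have hX1 : X.1 = 0 := by
        rcases mul_eq_zero.mp e1 with h | h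
        · rcases mul_eq_zero.mp h with h' | h'
          · exact absurd h' hτC
          · exact h'
        · exact absurd h hsub
      have hX2 : X.2 = 0 := by
        rcases mul_eq_zero.mp e2 with h | h
        · rcases mul_eq_zero.mp h with h' | h'
          · exact absurd h' hτC
          · exact h'
        · exact absurd h hsub
      exact hX (Prod.ext_iff.mpr ⟨hX1, hX2⟩)
    · have hd1 : HasDerivAt (fun w : ℂ => z₁ + (τ : ℂ) * X.1 * w) ((τ : ℂ) * X.1) 0 := by
        simpa using (((hasDerivAt_id (0 : ℂ)).const_mul ((τ : ℂ) * X.1)).const_add z₁)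
      have hd2 : HasDerivAt (fun w : ℂ => z₂ + (τ : ℂ) * X.2 * w) ((τ : ℂ) * X.2) 0 := by
        simpa using (((hasDerivAt_id (0 : ℂ)).const_mul ((τ : ℂ) * X.2)).const_add z₂)
      have hD : HasDerivAt f ((τ : ℂ) * X.1, (τ : ℂ) * X.2) 0 := hd1.prodMk hd2
      rw [hD.deriv]
      refine Prod.ext_iff.mpr ⟨?_, ?_⟩ <;>
        · simp only [Prod.smul_mk, smul_eq_mul]
          field_simp

lemma swap_derivs {f : ℂ → ℂ × ℂ} (hf : DifferentiableOn ℂ f unitDisc) :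
    HasDerivAt (fun w => ((f w).2, (f w).1)) ((deriv f 0).2, (deriv f 0).1) 0 := by
  have hd := hasDerivAt_zero_of_diffOn hf
  have hfst : HasDerivAt (fun w => (f w).1) (deriv f 0).1 0 :=
    by have := hasFDerivAt_fst.comp_hasDerivAt 0 hd; exact this
  have hsnd : HasDerivAt (fun w => (f w).2) (deriv f 0).2 0 :=
    by have := hasFDerivAt_snd.comp_hasDerivAt 0 hd; exact this
  exact hsnd.prodMk hfst

lemma HSet_swap_mem {D₁ D₂ : Set ℂ} {z X : ℂ × ℂ} {r : ℝ}
    (hr : r ∈ HSet (D₁ ×ˢ D₂) z X) : r ∈ HSet (D₂ ×ˢ D₁) (z.2, z.1) (X.2, X.1) := by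
  obtain ⟨α, f, h1, h2, h3, h4, h5, h6⟩ := hr
  have hd2 := swap_derivs h2
  refine ⟨α, fun w => ((f w).2, (f w).1), h1, ?_, ?_, ?_, ?_, ?_⟩
  · exact (h2.snd).prodMk (h2.fst)
  · intro w hw; exact ⟨(h3 hw).2, (h3 hw).1⟩
  · intro a ha b hb hab
    apply h4 ha hb
    have h' := Prod.ext_iff.mp hab
    exact Prod.ext_iff.mpr ⟨h'.2, h'.1⟩
  · simp [h5]
  · rw [hd2.deriv]
    have e1 : α • (deriv f 0).1 = X.1 := by
      have := congrArg Prod.fst h6; simpa using this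
    have e2 : α • (deriv f 0).2 = X.2 := by
      have := congrArg Prod.snd h6; simpa using this
    exact Prod.ext_iff.mpr ⟨by simpa using e2, by simpa using e1⟩

lemma KSet_swap_mem {D₁ D₂ : Set ℂ} {z X : ℂ × ℂ} {r : ℝ}
    (hr : r ∈ KSet (D₁ ×ˢ D₂) z X) : r ∈ KSet (D₂ ×ˢ D₁) (z.2, z.1) (X.2, X.1) := by
  obtain ⟨α, f, h1, h2, h3, h5, h6⟩ := hr
  have hd2 := swap_derivs h2
  refine ⟨α, fun w => ((f w).2, (f w).1), h1, ?_, ?_, ?_, ?_⟩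
  · exact (h2.snd).prodMk (h2.fst)
  · intro w hw; exact ⟨(h3 hw).2, (h3 hw).1⟩
  · simp [h5]
  · rw [hd2.deriv]
    have e1 : α • (deriv f 0).1 = X.1 := by
      have := congrArg Prod.fst h6; simpa using this
    have e2 : α • (deriv f 0).2 = X.2 := by
      have := congrArg Prod.snd h6; simpa using this
    exact Prod.ext_iff.mpr ⟨by simpa using e2, by simpa using e1⟩

lemma HSet_swap (D₁ D₂ : Set ℂ) (z X : ℂ × ℂ) :
    HSet (D₁ ×ˢ D₂) z X = HSet (D₂ ×ˢ D₁) (z.2, z.1) (X.2, X.1) := by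
  apply Set.Subset.antisymm
  · intro r hr; exact HSet_swap_mem hr
  · intro r hr
    have := HSet_swap_mem (D₁ := D₂) (D₂ := D₁) hr
    simpa using this

lemma KSet_swap (D₁ D₂ : Set ℂ) (z X : ℂ × ℂ) :
    KSet (D₁ ×ˢ D₂) z X = KSet (D₂ ×ˢ D₁) (z.2, z.1) (X.2, X.1) := by
  apply Set.Subset.antisymm
  · intro r hr; exact KSet_swap_mem hr
  · intro r hr
    have := KSet_swap_mem (D₁ := D₂) (D₂ := D₁) hr
    simpa using this

-- distance between two points of the unit disc is < 2
lemma abs_sub_lt_two {a b : ℂ} (ha : a ∈ unitDisc) (hb : b ∈ unitDisc) :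
    ‖(a - b)‖ < 2 := by
  have h := norm_sub_le_norm_sub_add_norm_sub a 0 b
  simp only [sub_zero, zero_sub, norm_neg] at h
  have := abs_lt_one_of_mem ha
  have := abs_lt_one_of_mem hb
  linarith


/-- Case A : `X.1 ≠ 0`.  Given a Kobayashi competitor `(α, F)`, build an injective
competitor with the same `α`. -/
lemma caseA {D₁ D₂ : Set ℂ} (h₂ : IsOpen D₂)
    {u v : ℂ → ℂ} (hu_diff : DifferentiableOn ℂ u D₂)
    (hv_diff : DifferentiableOn ℂ v ({(0:ℂ)}ᶜ))
    (hu_maps : MapsTo u D₂ ({(0:ℂ)}ᶜ)) (hv_maps : MapsTo v ({(0:ℂ)}ᶜ) D₂)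
    (hvu : ∀ z ∈ D₂, v (u z) = z) (huv : ∀ w ∈ ({(0:ℂ)}ᶜ : Set ℂ), u (v w) = w)
    {z₁ z₂ : ℂ} (hz₂ : z₂ ∈ D₂) {X : ℂ × ℂ} (hX1 : X.1 ≠ 0)
    {α : ℂ} {F : ℂ → ℂ × ℂ}
    (hF_diff : DifferentiableOn ℂ F unitDisc) (hF_maps : MapsTo F unitDisc (D₁ ×ˢ D₂))
    (hF0 : F 0 = (z₁, z₂)) (hFd : α • deriv F 0 = X) :
    ‖α‖ ∈ HSet (D₁ ×ˢ D₂) (z₁, z₂) X := by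
  -- basic data from the biholomorphism
  set w₀ := u z₂ with hw₀def
  have hw₀mem : w₀ ∈ ({(0:ℂ)}ᶜ : Set ℂ) := hu_maps hz₂
  have hw₀ : w₀ ≠ 0 := hw₀mem
  have hvw₀ : v w₀ = z₂ := hvu z₂ hz₂
  have hv_at : DifferentiableAt ℂ v w₀ :=
    hv_diff.differentiableAt (isOpen_compl_singleton.mem_nhds hw₀mem)
  set v' := deriv v w₀ with hv'def
  have hv'ne : v' ≠ 0 := by
    have hu_at : DifferentiableAt ℂ u z₂ := hu_diff.differentiableAt (h₂.mem_nhds hz₂)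
    have hu_at' : DifferentiableAt ℂ u (v w₀) := hvw₀ ▸ hu_at
    have hcomp : deriv (u ∘ v) w₀ = deriv u z₂ * v' := by
      rw [deriv_comp _ hu_at' hv_at, hvw₀]
    have hid : deriv (u ∘ v) w₀ = 1 := by
      have hev : u ∘ v =ᶠ[nhds w₀] id := by
        filter_upwards [isOpen_compl_singleton.mem_nhds hw₀mem] with w hw
        exact huv w hw
      rw [hev.deriv_eq, deriv_id]
    intro h0
    rw [hcomp, h0, mul_zero] at hid
    exact one_ne_zero hid.symm
  -- data from the competitor
  have hα : α ≠ 0 := by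
    intro h0
    rw [h0, zero_smul] at hFd
    exact hX1 (by rw [← hFd]; rfl)
  have hF_at : HasDerivAt F (deriv F 0) 0 := hasDerivAt_zero_of_diffOn hF_diff
  set f₁' := (deriv F 0).1 with hf₁'def
  have hf₁ : α * f₁' = X.1 := by
    have := congrArg Prod.fst hFd
    simpa using this
  have hf₁ne : f₁' ≠ 0 := by
    intro h0; apply hX1; rw [← hf₁, h0, mul_zero]
  set F₁ : ℂ → ℂ := fun w => (F w).1 with hF₁def
  have hF₁d : HasDerivAt F₁ f₁' 0 := by have := hasFDerivAt_fst.comp_hasDerivAt 0 hF_at; exact this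
  have hF₁0 : F₁ 0 = z₁ := by simp [hF₁def, hF0]
  have hF₁_diff : DifferentiableOn ℂ F₁ unitDisc := hF_diff.fst
  -- the construction
  set d : ℂ := (X.2 / (α * v' * w₀) - (Real.pi : ℂ)) / f₁' with hddef
  set ψ : ℂ → ℂ := fun w => (Real.pi : ℂ) * w + d * (F₁ w - z₁) with hψdef
  set h : ℂ → ℂ := fun w => w₀ * Complex.exp (ψ w) with hhdef
  set G : ℂ → ℂ × ℂ := fun w => (F₁ w, v (h w)) with hGdef
  have hψ0 : ψ 0 = 0 := by simp [hψdef, hF₁0]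
  have hψd : HasDerivAt ψ ((Real.pi : ℂ) + d * f₁') 0 := by
    have := (((hasDerivAt_id (0:ℂ)).const_mul ((Real.pi : ℂ)))).add
      ((hF₁d.sub_const z₁).const_mul d)
    rw [show ψ = ((fun y : ℂ => (Real.pi : ℂ) * y) + fun y => d * (F₁ y - z₁)) from rfl]
    simpa using this
  have hh0 : h 0 = w₀ := by simp [hhdef, hψ0]
  have hhne : ∀ w, h w ∈ ({(0:ℂ)}ᶜ : Set ℂ) := by
    intro w
    simp only [mem_compl_iff, mem_singleton_iff, hhdef]
    exact mul_ne_zero hw₀ (Complex.exp_ne_zero _)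
  have hhd : HasDerivAt h (w₀ * ((Real.pi : ℂ) + d * f₁')) 0 := by
    have := (hψd.cexp).const_mul w₀
    simpa [hψ0] using this
  have hG₂d : HasDerivAt (fun w => v (h w)) (v' * (w₀ * ((Real.pi : ℂ) + d * f₁'))) 0 := by
    have hv_at' : HasDerivAt v v' (h 0) := by rw [hh0]; exact hv_at.hasDerivAt
    have := HasDerivAt.comp 0 hv_at' hhd
    exact this
  have hGd : HasDerivAt G (f₁', v' * (w₀ * ((Real.pi : ℂ) + d * f₁'))) 0 := hF₁d.prodMk hG₂d
  refine ⟨α, G, rfl, ?_, ?_, ?_, ?_, ?_⟩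
  · -- differentiability
    apply DifferentiableOn.prodMk hF₁_diff
    have hψ_diff : DifferentiableOn ℂ ψ unitDisc := by
      apply DifferentiableOn.add
      · exact ((differentiable_id).const_mul _).differentiableOn
      · exact (hF₁_diff.sub_const _).const_mul _
    have hh_diff : DifferentiableOn ℂ h unitDisc := (hψ_diff.cexp).const_mul w₀
    exact hv_diff.comp hh_diff (fun w _ => hhne w)
  · -- maps to
    intro w hw
    exact ⟨(hF_maps hw).1, hv_maps (hhne w)⟩
  · -- injectivity
    intro a ha b hb hab
    have hab1 : F₁ a = F₁ b := by
      have := congrArg Prod.fst hab; simpa [hGdef] using this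
    have hab2 : v (h a) = v (h b) := by
      have := congrArg Prod.snd hab; simpa [hGdef] using this
    have hha : h a = h b := by
      have e1 := huv (h a) (hhne a)
      have e2 := huv (h b) (hhne b)
      rw [← e1, hab2, e2]
    have hexp : Complex.exp (ψ a) = Complex.exp (ψ b) :=
      mul_left_cancel₀ hw₀ hha
    obtain ⟨n, hn⟩ := Complex.exp_eq_exp_iff_exists_int.mp hexp
    have hlin : (Real.pi : ℂ) * (a - b) = n * (2 * (Real.pi : ℂ) * Complex.I) := by
      have h' : (Real.pi : ℂ) * a + d * (F₁ a - z₁)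
          = (Real.pi : ℂ) * b + d * (F₁ b - z₁) + n * (2 * (Real.pi : ℂ) * Complex.I) := hn
      rw [hab1] at h'
      linear_combination h'
    have hlt := abs_sub_lt_two ha hb
    have hn0 : n = 0 := by
      by_contra hn0
      have h1 : (1 : ℝ) ≤ ‖((n : ℂ))‖ := by
        rw [Complex.norm_intCast]
        exact_mod_cast Int.one_le_abs hn0
      have h2 : ‖(2 * (Real.pi : ℂ) * Complex.I)‖ = 2 * Real.pi := by
        rw [norm_mul, norm_mul, Complex.norm_two, Complex.norm_real, Real.norm_eq_abs, Complex.norm_I,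
          abs_of_pos Real.pi_pos, mul_one]
      have hR : 2 * Real.pi ≤ ‖((n : ℂ) * (2 * (Real.pi : ℂ) * Complex.I))‖ := by
        rw [norm_mul, h2]
        nlinarith [Real.pi_pos]
      have hL : ‖((Real.pi : ℂ) * (a - b))‖ < 2 * Real.pi := by
        rw [norm_mul, Complex.norm_real, Real.norm_eq_abs, abs_of_pos Real.pi_pos]
        nlinarith [Real.pi_pos, norm_nonneg (a - b)]
      rw [hlin] at hL
      linarith
    rw [hn0] at hlin
    simp only [Int.cast_zero, zero_mul] at hlin
    have hsub : a - b = 0 := by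
      rcases mul_eq_zero.mp hlin with h' | h'
      · exact absurd h' (Complex.ofReal_ne_zero.mpr Real.pi_ne_zero)
      · exact h'
    exact sub_eq_zero.mp hsub
  · -- value at 0
    simp [hGdef, hF₁0, hh0, hvw₀]
  · -- derivative condition
    rw [hGd.deriv]
    refine Prod.ext_iff.mpr ⟨by simpa using hf₁, ?_⟩
    simp only [Prod.smul_mk, smul_eq_mul]
    rw [hddef]
    field_simp
    ring


/-- Case B : `X.1 = 0`, `X.2 ≠ 0`.  For every `ε > 0` there is an injective competitor
with value at most `ε`. -/
lemma caseB {D₁ D₂ : Set ℂ} (h₁ : IsOpen D₁) (h₂ : IsOpen D₂)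
    {u v : ℂ → ℂ} (hu_diff : DifferentiableOn ℂ u D₂)
    (hv_diff : DifferentiableOn ℂ v ({(0:ℂ)}ᶜ))
    (hu_maps : MapsTo u D₂ ({(0:ℂ)}ᶜ)) (hv_maps : MapsTo v ({(0:ℂ)}ᶜ) D₂)
    (hvu : ∀ z ∈ D₂, v (u z) = z) (huv : ∀ w ∈ ({(0:ℂ)}ᶜ : Set ℂ), u (v w) = w)
    {z₁ z₂ : ℂ} (hz₁ : z₁ ∈ D₁) (hz₂ : z₂ ∈ D₂) {X : ℂ × ℂ}
    (hX1 : X.1 = 0) {ε : ℝ} (hε : 0 < ε) :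
    ∃ t ∈ HSet (D₁ ×ˢ D₂) (z₁, z₂) X, t ≤ ε := by
  obtain ⟨δ₁, hδ₁pos, hδ₁⟩ := Metric.isOpen_iff.mp h₁ z₁ hz₁
  -- biholomorphism data
  set w₀ := u z₂ with hw₀def
  have hw₀mem : w₀ ∈ ({(0:ℂ)}ᶜ : Set ℂ) := hu_maps hz₂
  have hw₀ : w₀ ≠ 0 := hw₀mem
  have hvw₀ : v w₀ = z₂ := hvu z₂ hz₂
  have hv_at : DifferentiableAt ℂ v w₀ :=
    hv_diff.differentiableAt (isOpen_compl_singleton.mem_nhds hw₀mem)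
  set v' := deriv v w₀ with hv'def
  have hv'ne : v' ≠ 0 := by
    have hu_at : DifferentiableAt ℂ u z₂ := hu_diff.differentiableAt (h₂.mem_nhds hz₂)
    have hu_at' : DifferentiableAt ℂ u (v w₀) := hvw₀ ▸ hu_at
    have hcomp : deriv (u ∘ v) w₀ = deriv u z₂ * v' := by
      rw [deriv_comp _ hu_at' hv_at, hvw₀]
    have hid : deriv (u ∘ v) w₀ = 1 := by
      have hev : u ∘ v =ᶠ[nhds w₀] id := by
        filter_upwards [isOpen_compl_singleton.mem_nhds hw₀mem] with w hw
        exact huv w hw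
      rw [hev.deriv_eq, deriv_id]
    intro h0
    rw [hcomp, h0, mul_zero] at hid
    exact one_ne_zero hid.symm
  have habsv' : 0 < ‖v'‖ := by
    simpa [norm_pos_iff] using hv'ne
  have habsw₀ : 0 < ‖w₀‖ := by
    simpa [norm_pos_iff] using hw₀
  -- choose the constants (kept opaque to avoid heavy unfolding)
  obtain ⟨Cr, hCr1, hCrb⟩ :
      ∃ Cr : ℝ, 1 ≤ Cr ∧ ‖X.2‖ / (‖v'‖ * ‖w₀‖ * ε) ≤ Cr :=
    ⟨max 1 (‖X.2‖ / (‖v'‖ * ‖w₀‖ * ε)),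
      le_max_left _ _, le_max_right _ _⟩
  have hCrpos : 0 < Cr := lt_of_lt_of_le one_pos hCr1
  set C : ℂ := (Cr : ℂ) with hCdef
  have hCne : C ≠ 0 := Complex.ofReal_ne_zero.mpr hCrpos.ne'
  obtain ⟨q, hqC, hq1⟩ : ∃ q : ℕ, Cr ≤ (q : ℝ) ∧ 1 ≤ q :=
    ⟨⌈Cr⌉₊, Nat.le_ceil _, Nat.one_le_ceil_iff.mpr hCrpos⟩
  have hq1' : (1 : ℝ) ≤ (q : ℝ) := by exact_mod_cast hq1
  have hqne : ((q : ℕ) : ℂ) ≠ 0 := Nat.cast_ne_zero.mpr (by omega)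
  have hexpCr : (1:ℝ) ≤ Real.exp Cr := by
    rw [show (1:ℝ) = Real.exp 0 by simp]
    exact Real.exp_le_exp.mpr hCrpos.le
  obtain ⟨A, hApos, hA5⟩ :
      ∃ A : ℝ, 0 < A ∧ Real.exp Cr + (q : ℝ) * Real.exp Cr + (q : ℝ) ≤ A :=
    ⟨(2 * (q : ℝ) + 2) * Real.exp Cr, by positivity, by nlinarith⟩
  obtain ⟨ε', hε'pos, hfin⟩ : ∃ ε' : ℝ, 0 < ε' ∧ ε' * A < δ₁ := by
    refine ⟨δ₁ / (A + 1), by positivity, ?_⟩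
    rw [div_mul_eq_mul_div, div_lt_iff₀ (by positivity)]
    nlinarith
  have hε'ne : ((ε' : ℝ) : ℂ) ≠ 0 := Complex.ofReal_ne_zero.mpr hε'pos.ne'
  -- the maps
  set g : ℂ → ℂ := fun w =>
    z₁ + (ε' : ℂ) * (Complex.exp (C * w) - (q : ℂ) * Complex.exp (C * w / q) + ((q : ℂ) - 1))
    with hgdef
  set h : ℂ → ℂ := fun w => w₀ * Complex.exp (C * w) with hhdef
  set G : ℂ → ℂ × ℂ := fun w => (g w, v (h w)) with hGdef
  set β : ℂ := X.2 / (v' * w₀ * C) with hβdef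
  have hg0 : g 0 = z₁ := by
    simp only [hgdef, mul_zero, zero_div, Complex.exp_zero]
    ring
  have hh0 : h 0 = w₀ := by simp [hhdef]
  have hhne : ∀ w, h w ∈ ({(0:ℂ)}ᶜ : Set ℂ) := by
    intro w
    simp only [mem_compl_iff, mem_singleton_iff, hhdef]
    exact mul_ne_zero hw₀ (Complex.exp_ne_zero _)
  -- derivatives
  have hinner1 : HasDerivAt (fun w : ℂ => C * w) C 0 := by
    simpa using (hasDerivAt_id (0 : ℂ)).const_mul C
  have hexp1 : HasDerivAt (fun w : ℂ => Complex.exp (C * w)) C 0 := by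
    have := hinner1.cexp
    simpa using this
  have hinner2 : HasDerivAt (fun w : ℂ => C * w / q) (C / q) 0 := by
    simpa using hinner1.div_const (q : ℂ)
  have hexp2 : HasDerivAt (fun w : ℂ => Complex.exp (C * w / q)) (C / q) 0 := by
    have := hinner2.cexp
    simpa using this
  have hgd0 : HasDerivAt g ((ε' : ℂ) * (C - (q : ℂ) * (C / q))) 0 := by
    have hsum : HasDerivAt
        (fun w : ℂ => Complex.exp (C * w) - (q : ℂ) * Complex.exp (C * w / q) + ((q : ℂ) - 1))
        (C - (q : ℂ) * (C / q)) 0 := by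
      exact ((hexp1.sub (hexp2.const_mul ((q : ℕ) : ℂ))).add_const _)
    simpa [hgdef] using ((hsum.const_mul ((ε' : ℝ) : ℂ)).const_add z₁)
  have hgval : (ε' : ℂ) * (C - (q : ℂ) * (C / q)) = 0 := by
    field_simp
    ring
  have hgd : HasDerivAt g 0 0 := hgval ▸ hgd0
  have hhd : HasDerivAt h (w₀ * C) 0 := by
    simpa using hexp1.const_mul w₀
  have hG₂d : HasDerivAt (fun w => v (h w)) (v' * (w₀ * C)) 0 := by
    have hv_at' : HasDerivAt v v' (h 0) := by rw [hh0]; exact hv_at.hasDerivAt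
    have := HasDerivAt.comp 0 hv_at' hhd
    exact this
  have hGd : HasDerivAt G (0, v' * (w₀ * C)) 0 := hgd.prodMk hG₂d
  -- the bound on |β|
  have habsβ : ‖β‖ ≤ ε := by
    rw [hβdef, norm_div, norm_mul, norm_mul, hCdef, Complex.norm_real, Real.norm_eq_abs, abs_of_pos hCrpos]
    rw [div_le_iff₀ (by positivity)]
    have h1 : ‖X.2‖ ≤ Cr * (‖v'‖ * ‖w₀‖ * ε) := by
      rw [← div_le_iff₀ (by positivity)] at *
      calc ‖X.2‖ / (‖v'‖ * ‖w₀‖ * ε) ≤ Cr := hCrb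
        _ = Cr := rfl
    nlinarith [hCrb]
  refine ⟨‖β‖, ⟨β, G, rfl, ?_, ?_, ?_, ?_, ?_⟩, habsβ⟩
  · -- differentiability
    apply DifferentiableOn.prodMk
    · apply DifferentiableOn.const_add
      apply DifferentiableOn.const_mul
      apply DifferentiableOn.add_const
      apply DifferentiableOn.sub
      · exact (Differentiable.differentiableOn (by fun_prop))
      · exact (Differentiable.differentiableOn (by fun_prop))
    · have hh_diff : DifferentiableOn ℂ h unitDisc :=
        (Differentiable.differentiableOn (by fun_prop))
      exact hv_diff.comp hh_diff (fun w _ => hhne w)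
  · -- maps to
    intro w hw
    have hw1 := abs_lt_one_of_mem hw
    constructor
    · apply hδ₁
      simp only [Metric.mem_ball, Complex.dist_eq, hgdef]
      have e0 : z₁ + (ε' : ℂ) * (Complex.exp (C * w) - (q : ℂ) * Complex.exp (C * w / q)
          + ((q : ℂ) - 1)) - z₁
          = (ε' : ℂ) * (Complex.exp (C * w) - (q : ℂ) * Complex.exp (C * w / q)
          + ((q : ℂ) - 1)) := by ring
      rw [e0, norm_mul, Complex.norm_real, Real.norm_eq_abs, abs_of_pos hε'pos]
      -- now bound the second factor by A
      have hb1 : ‖(Complex.exp (C * w))‖ ≤ Real.exp Cr := by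
        rw [Complex.norm_exp]
        apply Real.exp_le_exp.mpr
        have : (C * w).re = Cr * w.re := by
          simp [hCdef, Complex.mul_re]
        rw [this]
        nlinarith [Complex.abs_re_le_norm w, abs_le.mp (le_refl |w.re|)]
      have hb2 : ‖(Complex.exp (C * w / q))‖ ≤ Real.exp Cr := by
        rw [Complex.norm_exp]
        apply Real.exp_le_exp.mpr
        have hqpos : (0:ℝ) < (q:ℝ) := by exact_mod_cast hq1
        have e1 : C * w / q = (((Cr / q : ℝ)) : ℂ) * w := by
          push_cast
          field_simp
          rw [hCdef]; ring
        rw [e1]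
        have : ((((Cr / q : ℝ)) : ℂ) * w).re = (Cr / q) * w.re := by
          simp [Complex.mul_re]
        rw [this]
        have h1 : Cr / q ≤ Cr := by
          rw [div_le_iff₀ hqpos]
          nlinarith
        have h2 : (Cr / q) * w.re ≤ (Cr / q) * |w.re| := by
          apply mul_le_mul_of_nonneg_left (le_abs_self _) (by positivity)
        have h3 : |w.re| ≤ 1 := by
          have := Complex.abs_re_le_norm w
          linarith
        nlinarith [div_pos hCrpos hqpos]
      have hb3 : ‖((q : ℂ) - 1)‖ ≤ (q : ℝ) := by
        have e : ((q : ℂ)) - 1 = (((q : ℝ) - 1 : ℝ) : ℂ) := by push_cast; ring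
        rw [e, Complex.norm_real, Real.norm_eq_abs, _root_.abs_of_nonneg (by linarith)]
        linarith
      have hb4 : ‖((q : ℂ) * Complex.exp (C * w / q))‖ ≤ (q : ℝ) * Real.exp Cr := by
        rw [norm_mul, Complex.norm_natCast]
        apply mul_le_mul_of_nonneg_left hb2 (by positivity)
      have htri : ‖(Complex.exp (C * w) - (q : ℂ) * Complex.exp (C * w / q)
          + ((q : ℂ) - 1))‖
          ≤ ‖(Complex.exp (C * w))‖ + ‖((q : ℂ) * Complex.exp (C * w / q))‖
            + ‖((q : ℂ) - 1)‖ := by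
        calc ‖(Complex.exp (C * w) - (q : ℂ) * Complex.exp (C * w / q) + ((q : ℂ) - 1))‖
            ≤ ‖(Complex.exp (C * w) - (q : ℂ) * Complex.exp (C * w / q))‖
              + ‖((q : ℂ) - 1)‖ := norm_add_le _ _
          _ ≤ ‖(Complex.exp (C * w))‖ + ‖((q : ℂ) * Complex.exp (C * w / q))‖
              + ‖((q : ℂ) - 1)‖ := by
                have := norm_sub_le_norm_sub_add_norm_sub (Complex.exp (C * w)) 0
                  ((q : ℂ) * Complex.exp (C * w / q))
                simp only [sub_zero, zero_sub, norm_neg] at this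
                linarith
      have hA' : ‖(Complex.exp (C * w) - (q : ℂ) * Complex.exp (C * w / q)
          + ((q : ℂ) - 1))‖ ≤ A := by
        have h5 : ‖(Complex.exp (C * w) - (q : ℂ) * Complex.exp (C * w / q)
            + ((q : ℂ) - 1))‖ ≤ Real.exp Cr + (q : ℝ) * Real.exp Cr + (q : ℝ) := by
          refine le_trans htri ?_
          linarith [hb1, hb4, hb3]
        exact h5.trans hA5
      have hmul : ε' * ‖(Complex.exp (C * w) - (q : ℂ) * Complex.exp (C * w / q)
          + ((q : ℂ) - 1))‖ ≤ ε' * A := mul_le_mul_of_nonneg_left hA' hε'pos.le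
      exact lt_of_le_of_lt hmul hfin
    · exact hv_maps (hhne w)
  · -- injectivity
    intro a ha b hb hab
    have hab' : (g a, v (h a)) = (g b, v (h b)) := hab
    have hab1 : g a = g b := congrArg Prod.fst hab'
    have hab2 : v (h a) = v (h b) := congrArg Prod.snd hab'
    have hha : h a = h b := by
      have e1 := huv (h a) (hhne a)
      have e2 := huv (h b) (hhne b)
      rw [← e1, hab2, e2]
    have hexpab : Complex.exp (C * a) = Complex.exp (C * b) :=
      mul_left_cancel₀ hw₀ hha
    obtain ⟨n, hn⟩ := Complex.exp_eq_exp_iff_exists_int.mp hexpab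
    -- from the first component : exp (C a / q) = exp (C b / q)
    have hT : Complex.exp (C * a) - (q : ℂ) * Complex.exp (C * a / q)
        = Complex.exp (C * b) - (q : ℂ) * Complex.exp (C * b / q) := by
      have h' := hab1
      simp only [hgdef] at h'
      have h'' := add_left_cancel h'
      have h''' := mul_left_cancel₀ hε'ne h''
      linear_combination h'''
    have hexpq : Complex.exp (C * a / q) = Complex.exp (C * b / q) := by
      apply mul_left_cancel₀ hqne
      linear_combination hexpab - hT
    obtain ⟨m, hm⟩ := Complex.exp_eq_exp_iff_exists_int.mp hexpq
    -- n = q * m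
    have h2πI : (2 * (Real.pi : ℂ) * Complex.I) ≠ 0 := by
      simp [Real.pi_ne_zero, Complex.I_ne_zero]
    have hnm : (n : ℂ) = (m : ℂ) * (q : ℂ) := by
      rw [hn] at hm
      apply mul_right_cancel₀ h2πI
      have expand : (C * b + (n : ℂ) * (2 * (Real.pi : ℂ) * Complex.I)) / q
          = C * b / q + (n : ℂ) * (2 * (Real.pi : ℂ) * Complex.I) / q := by ring
      rw [expand] at hm
      have hcancel : (n : ℂ) * (2 * (Real.pi : ℂ) * Complex.I) / q
          = (m : ℂ) * (2 * (Real.pi : ℂ) * Complex.I) := by linear_combination hm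
      field_simp at hcancel
      linear_combination hcancel * (2 * (Real.pi : ℂ) * Complex.I)
    have hnm' : n = m * q := by exact_mod_cast hnm
    -- size bound : |n| π < Cr ≤ q
    have hlt := abs_sub_lt_two ha hb
    have hlin : C * (a - b) = (n : ℂ) * (2 * (Real.pi : ℂ) * Complex.I) := by
      linear_combination hn
    have hm0 : m = 0 := by
      by_contra hm0
      have hq_le_n : (q : ℝ) ≤ |(n : ℝ)| := by
        rw [hnm']
        push_cast
        rw [abs_mul, Nat.abs_cast]
        have h1 : (1:ℝ) ≤ |(m:ℝ)| := by exact_mod_cast Int.one_le_abs hm0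
        nlinarith [Nat.cast_nonneg (α := ℝ) q]
      -- compute absolute values in hlin
      have hLabs : ‖(C * (a - b))‖ = Cr * ‖(a - b)‖ := by
        rw [norm_mul, hCdef, Complex.norm_real, Real.norm_eq_abs, abs_of_pos hCrpos]
      have hRabs : ‖((n : ℂ) * (2 * (Real.pi : ℂ) * Complex.I))‖
          = |(n : ℝ)| * (2 * Real.pi) := by
        rw [norm_mul, norm_mul, norm_mul, Complex.norm_intCast, Complex.norm_two,
          Complex.norm_real, Real.norm_eq_abs, Complex.norm_I, abs_of_pos Real.pi_pos, mul_one]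
      have heq : Cr * ‖(a - b)‖ = |(n : ℝ)| * (2 * Real.pi) := by
        rw [← hLabs, ← hRabs, hlin]
      -- Cr * |a-b| < 2 Cr  and  |n| * 2π ≥ q * 2π ≥ Cr * 2π > 2 Cr (π > 1)
      have hπ : (3 : ℝ) < Real.pi := Real.pi_gt_three
      nlinarith [norm_nonneg (a - b), hqC]
    have hn0 : n = 0 := by rw [hnm', hm0]; ring
    rw [hn0] at hlin
    simp only [Int.cast_zero, zero_mul] at hlin
    have hsub : a - b = 0 := by
      rcases mul_eq_zero.mp hlin with h' | h'
      · exact absurd h' hCne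
      · exact h'
    exact sub_eq_zero.mp hsub
  · -- value at 0
    show (g 0, v (h 0)) = (z₁, z₂)
    rw [hg0, hh0, hvw₀]
  · -- derivative
    rw [hGd.deriv]
    refine Prod.ext_iff.mpr ⟨by simpa using hX1.symm, ?_⟩
    simp only [Prod.smul_mk, smul_eq_mul]
    rw [hβdef, div_mul_eq_mul_div,
      div_eq_iff (mul_ne_zero (mul_ne_zero hv'ne hw₀) hCne)]
    ring


lemma key {D₁ D₂ : Set ℂ} (h₁ : IsOpen D₁) (h₂ : IsOpen D₂)
    (hbh : Biholomorphic D₂ {(0 : ℂ)}ᶜ) {z₁ z₂ : ℂ}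
    (hz₁ : z₁ ∈ D₁) (hz₂ : z₂ ∈ D₂) (X : ℂ × ℂ) :
    hahn (D₁ ×ˢ D₂) (z₁, z₂) X ≤ kobayashi (D₁ ×ˢ D₂) (z₁, z₂) X := by
  obtain ⟨u, v, hu_diff, hv_diff, hu_maps, hv_maps, hvu, huv⟩ := hbh
  rw [hahn_eq_HSet, kobayashi_eq_KSet]
  refine le_csInf ?_ ?_
  · obtain ⟨t, ht⟩ := HSet_nonempty h₁ h₂ hz₁ hz₂ X
    exact ⟨t, HSet_subset_KSet ht⟩
  intro s hs
  obtain ⟨α, F, hαs, hF_diff, hF_maps, hF0, hFd⟩ := hs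
  have hs0 : 0 ≤ s := hαs ▸ norm_nonneg α
  refine le_of_forall_pos_le_add fun ε hε => ?_
  have hmem : ∃ t ∈ HSet (D₁ ×ˢ D₂) (z₁, z₂) X, t ≤ s + ε := by
    by_cases hX1 : X.1 = 0
    · obtain ⟨t, ht, htε⟩ := caseB h₁ h₂ hu_diff hv_diff hu_maps hv_maps hvu huv
        hz₁ hz₂ hX1 hε
      exact ⟨t, ht, by linarith⟩
    · refine ⟨‖α‖, ?_, by linarith⟩
      exact caseA h₂ hu_diff hv_diff hu_maps hv_maps hvu huv hz₂ hX1
        hF_diff hF_maps hF0 hFd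
  obtain ⟨t, htmem, hts⟩ := hmem
  exact le_trans (csInf_le (HSet_bddBelow _ _ _) htmem) hts

lemma kobayashi_le_hahn {D₁ D₂ : Set ℂ} (h₁ : IsOpen D₁) (h₂ : IsOpen D₂) {z₁ z₂ : ℂ}
    (hz₁ : z₁ ∈ D₁) (hz₂ : z₂ ∈ D₂) (X : ℂ × ℂ) :
    kobayashi (D₁ ×ˢ D₂) (z₁, z₂) X ≤ hahn (D₁ ×ˢ D₂) (z₁, z₂) X := by
  rw [kobayashi_eq_KSet, hahn_eq_HSet]
  exact csInf_le_csInf (KSet_bddBelow _ _ _) (HSet_nonempty h₁ h₂ hz₁ hz₂ X)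
    HSet_subset_KSet

end AuxHK


open AuxHK in
/-- If `D₁, D₂ ⊆ ℂ` are domains and at least one of them is biholomorphic to
`ℂ∗ = ℂ \\ {0}`, then the Hahn and Kobayashi–Royden pseudometrics of `D₁ × D₂` coincide. -/
theorem stmt1 (D₁ D₂ : Set ℂ) (hD₁ : IsOpen D₁ ∧ IsConnected D₁)
    (hD₂ : IsOpen D₂ ∧ IsConnected D₂)
    (hbh : Biholomorphic D₁ {(0 : ℂ)}ᶜ ∨ Biholomorphic D₂ {(0 : ℂ)}ᶜ) :
    ∀ z ∈ D₁ ×ˢ D₂, ∀ X : ℂ × ℂ, hahn (D₁ ×ˢ D₂) z X = kobayashi (D₁ ×ˢ D₂) z X := by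
  intro z hz X
  obtain ⟨hz₁, hz₂⟩ := hz
  have hzeq : z = (z.1, z.2) := rfl
  rcases hbh with hb₁ | hb₂
  · -- the first factor is biholomorphic to ℂ∗ : swap coordinates
    have e1 : hahn (D₁ ×ˢ D₂) z X = hahn (D₂ ×ˢ D₁) (z.2, z.1) (X.2, X.1) := by
      rw [hahn_eq_HSet, hahn_eq_HSet, HSet_swap]
    have e2 : kobayashi (D₁ ×ˢ D₂) z X = kobayashi (D₂ ×ˢ D₁) (z.2, z.1) (X.2, X.1) := by
      rw [kobayashi_eq_KSet, kobayashi_eq_KSet, KSet_swap]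
    rw [e1, e2]
    exact le_antisymm
      (key hD₂.1 hD₁.1 hb₁ hz₂ hz₁ (X.2, X.1))
      (kobayashi_le_hahn hD₂.1 hD₁.1 hz₂ hz₁ (X.2, X.1))
  · rw [hzeq]
    exact le_antisymm
      (key hD₁.1 hD₂.1 hb₂ hz₁ hz₂ X)
      (kobayashi_le_hahn hD₁.1 hD₂.1 hz₁ hz₂ X)
end
end

section
/- Let D₁ ⊆ ℂ be a domain on which the Hahn and Kobayashi–Royden pseudometrics coincide (h_{D₁} ≡ κ_{D₁}). Then for any domain D₂ ⊆ ℂ, the Hahn and Kobayashi–Royden pseudometrics of the product coincide: h_{D₁×D₂} ≡ κ_{D₁×D₂}. -/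
open Set Metric Complex

noncomputable section

/- ### Auxiliary lemmas -/

lemma mem_unitDisc {z : ℂ} : z ∈ unitDisc ↔ ‖z‖ < 1 := by
  simp [unitDisc, mem_ball, dist_eq]

lemma zero_mem_unitDisc : (0 : ℂ) ∈ unitDisc := by
  rw [mem_unitDisc]; simp

lemma hasDerivAt_linear (c : ℂ) : HasDerivAt (fun ζ : ℂ => c * ζ) c 0 := by
  simpa using (hasDerivAt_id (0:ℂ)).const_mul c

lemma mul_mapsTo {c : ℂ} (hc : ‖c‖ ≤ 1) :
    MapsTo (fun ζ : ℂ => c * ζ) unitDisc unitDisc := by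
  intro ζ hζ
  rw [mem_unitDisc] at hζ ⊢
  rw [norm_mul]
  calc ‖c‖ * ‖ζ‖ ≤ 1 * ‖ζ‖ :=
        mul_le_mul_of_nonneg_right hc (norm_nonneg _)
    _ = ‖ζ‖ := one_mul _
    _ < 1 := hζ

lemma hasDerivAt_comp_linear {u : ℂ → ℂ} {du : ℂ} (hdu : HasDerivAt u du 0) (c : ℂ) :
    HasDerivAt (fun ζ : ℂ => u (c * ζ)) (du * c) 0 := by
  have h1 : HasDerivAt u du (c * 0) := by rwa [mul_zero]
  exact h1.comp 0 (hasDerivAt_linear c)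

lemma hasDerivAt_fst' {f : ℂ → ℂ × ℂ} {p : ℂ × ℂ} {x : ℂ} (h : HasDerivAt f p x) :
    HasDerivAt (fun ζ => (f ζ).1) p.1 x := by
  exact (ContinuousLinearMap.fst ℂ ℂ ℂ).hasFDerivAt.comp_hasDerivAt x h

lemma hasDerivAt_snd' {f : ℂ → ℂ × ℂ} {p : ℂ × ℂ} {x : ℂ} (h : HasDerivAt f p x) :
    HasDerivAt (fun ζ => (f ζ).2) p.2 x := by
  exact (ContinuousLinearMap.snd ℂ ℂ ℂ).hasFDerivAt.comp_hasDerivAt x h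

lemma affine_witness (D : Set ℂ) {ρ : ℝ} {z : ℂ} (hball : ball z ρ ⊆ D)
    (c : ℂ) (hc : ‖c‖ < ρ) :
    DifferentiableOn ℂ (fun ζ : ℂ => z + c * ζ) unitDisc ∧
      MapsTo (fun ζ : ℂ => z + c * ζ) unitDisc D ∧
      (c ≠ 0 → InjOn (fun ζ : ℂ => z + c * ζ) unitDisc) ∧
      (fun ζ : ℂ => z + c * ζ) 0 = z ∧ deriv (fun ζ : ℂ => z + c * ζ) 0 = c := by
  refine ⟨(differentiableOn_const z).add ((differentiable_id.const_mul c).differentiableOn),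
    ?_, ?_, by simp, ((hasDerivAt_linear c).const_add z).deriv⟩
  · intro ζ hζ
    rw [mem_unitDisc] at hζ
    apply hball
    rw [mem_ball]
    simp only [dist_eq, add_sub_cancel_left, norm_mul]
    calc ‖c‖ * ‖ζ‖ ≤ ‖c‖ * 1 :=
          mul_le_mul_of_nonneg_left (le_of_lt hζ) (norm_nonneg _)
      _ = ‖c‖ := mul_one _
      _ < ρ := hc
  · intro hc0 a _ b _ hab
    simp only [add_right_inj] at hab
    exact mul_left_cancel₀ hc0 hab

lemma nonempty1 (D : Set ℂ) (hD : IsOpen D) {z : ℂ} (hz : z ∈ D) (X : ℂ) :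
    ∃ (α : ℂ) (f : ℂ → ℂ), DifferentiableOn ℂ f unitDisc ∧ MapsTo f unitDisc D ∧
      InjOn f unitDisc ∧ f 0 = z ∧ α • deriv f 0 = X ∧ (X = 0 → α = 0) := by
  obtain ⟨ρ, hρ, hball⟩ := Metric.isOpen_iff.mp hD z hz
  by_cases hX : X = 0
  · have habs : ‖((ρ/2 : ℝ) : ℂ)‖ < ρ := by
      rw [Complex.norm_real, Real.norm_eq_abs, abs_of_pos (by linarith)]; linarith
    obtain ⟨h1, h2, h3, h4, h5⟩ := affine_witness D hball ((ρ/2 : ℝ) : ℂ) habs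
    have hne : ((ρ/2 : ℝ) : ℂ) ≠ 0 := by
      simp only [ne_eq, Complex.ofReal_eq_zero]; linarith
    exact ⟨0, _, h1, h2, h3 hne, h4, by simp [hX], fun _ => rfl⟩
  · have hXa : 0 < ‖X‖ := by
      simpa [norm_pos_iff] using hX
    set s : ℝ := ρ / (2 * ‖X‖) with hs
    have hs0 : 0 < s := by positivity
    have habs : ‖((s:ℂ) * X)‖ < ρ := by
      rw [norm_mul, Complex.norm_real, Real.norm_eq_abs, abs_of_pos hs0, hs]
      have heq2 : ‖X‖ * (ρ / (2 * ‖X‖)) = ρ / 2 := by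
        field_simp
      rw [mul_comm, heq2]
      linarith
    obtain ⟨h1, h2, h3, h4, h5⟩ := affine_witness D hball ((s:ℂ) * X) habs
    have hcne : ((s:ℂ) * X) ≠ 0 := by
      apply mul_ne_zero _ hX
      simp only [ne_eq, Complex.ofReal_eq_zero]; exact ne_of_gt hs0
    refine ⟨((s:ℝ) : ℂ)⁻¹, _, h1, h2, h3 hcne, h4, ?_, fun h => absurd h hX⟩
    rw [h5, smul_eq_mul]
    have : ((s:ℝ):ℂ) ≠ 0 := by
      simp only [ne_eq, Complex.ofReal_eq_zero]; exact ne_of_gt hs0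
    field_simp

lemma nonempty2 (D₁ D₂ : Set ℂ) (hD₁ : IsOpen D₁) (hD₂ : IsOpen D₂)
    {z : ℂ × ℂ} (hz : z ∈ D₁ ×ˢ D₂) (X : ℂ × ℂ) :
    ∃ (α : ℂ) (f : ℂ → ℂ × ℂ), DifferentiableOn ℂ f unitDisc ∧
      MapsTo f unitDisc (D₁ ×ˢ D₂) ∧ InjOn f unitDisc ∧ f 0 = z ∧
      α • deriv f 0 = X ∧ (X = 0 → α = 0) := by
  obtain ⟨ρ₁, hρ₁, hball₁⟩ := Metric.isOpen_iff.mp hD₁ z.1 (mem_prod.mp hz).1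
  obtain ⟨ρ₂, hρ₂, hball₂⟩ := Metric.isOpen_iff.mp hD₂ z.2 (mem_prod.mp hz).2
  have key : ∀ c₁ c₂ : ℂ, ‖c₁‖ < ρ₁ → ‖c₂‖ < ρ₂ → c₁ ≠ 0 →
      ∃ f : ℂ → ℂ × ℂ, DifferentiableOn ℂ f unitDisc ∧
        MapsTo f unitDisc (D₁ ×ˢ D₂) ∧ InjOn f unitDisc ∧ f 0 = z ∧
        deriv f 0 = (c₁, c₂) := by
    intro c₁ c₂ hc₁ hc₂ hc₁0
    obtain ⟨d1, m1, i1, e1, _⟩ := affine_witness D₁ hball₁ c₁ hc₁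
    obtain ⟨d2, m2, _, e2, _⟩ := affine_witness D₂ hball₂ c₂ hc₂
    refine ⟨fun ζ => (z.1 + c₁ * ζ, z.2 + c₂ * ζ), ?_, ?_, ?_, by simp, ?_⟩
    · exact DifferentiableOn.prodMk d1 d2
    · intro ζ hζ
      exact mem_prod.mpr ⟨m1 hζ, m2 hζ⟩
    · intro a ha b hb hab
      rw [Prod.mk.injEq] at hab
      exact i1 hc₁0 ha hb hab.1
    · exact (((hasDerivAt_linear c₁).const_add z.1).prodMk
        ((hasDerivAt_linear c₂).const_add z.2)).deriv
  by_cases hX : X = 0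
  · have habs : ‖((ρ₁/2 : ℝ) : ℂ)‖ < ρ₁ := by
      rw [Complex.norm_real, Real.norm_eq_abs, abs_of_pos (by linarith)]; linarith
    have habs0 : ‖(0 : ℂ)‖ < ρ₂ := by simpa using hρ₂
    have hne : ((ρ₁/2 : ℝ) : ℂ) ≠ 0 := by
      simp only [ne_eq, Complex.ofReal_eq_zero]; linarith
    obtain ⟨f, h1, h2, h3, h4, h5⟩ := key ((ρ₁/2 : ℝ) : ℂ) 0 habs habs0 hne
    exact ⟨0, f, h1, h2, h3, h4, by simp [hX], fun _ => rfl⟩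
  · have hXa : 0 < ‖X.1‖ + ‖X.2‖ := by
      rcases not_and_or.mp (by simpa [Prod.ext_iff] using hX) with h | h
      · have : 0 < ‖X.1‖ := by simpa [norm_pos_iff] using h
        positivity
      · have : 0 < ‖X.2‖ := by simpa [norm_pos_iff] using h
        positivity
    set s : ℝ := min ρ₁ ρ₂ / (2 * (‖X.1‖ + ‖X.2‖)) with hs
    have hmin : 0 < min ρ₁ ρ₂ := lt_min hρ₁ hρ₂
    have hs0 : 0 < s := by positivity
    have hkey : ∀ W : ℂ, ‖W‖ ≤ ‖X.1‖ + ‖X.2‖ →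
        ∀ ρ : ℝ, min ρ₁ ρ₂ ≤ ρ → 0 < ρ → ‖((s:ℂ) * W)‖ < ρ := by
      intro W hW ρ hρle hρpos
      rw [norm_mul, Complex.norm_real, Real.norm_eq_abs, abs_of_pos hs0, hs]
      calc min ρ₁ ρ₂ / (2 * (‖X.1‖ + ‖X.2‖)) * ‖W‖
          ≤ min ρ₁ ρ₂ / (2 * (‖X.1‖ + ‖X.2‖)) *
            (‖X.1‖ + ‖X.2‖) := by
            apply mul_le_mul_of_nonneg_left hW (by positivity)
        _ = min ρ₁ ρ₂ / 2 := by field_simp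
        _ < ρ := by linarith
    rcases not_and_or.mp (by simpa [Prod.ext_iff] using hX) with h0 | h0
    · obtain ⟨f, h1, h2, h3, h4, h5⟩ := key ((s:ℂ) * X.1) ((s:ℂ) * X.2)
        (hkey X.1 (by linarith [norm_nonneg X.2]) ρ₁ (min_le_left _ _) hρ₁)
        (hkey X.2 (by linarith [norm_nonneg X.1]) ρ₂ (min_le_right _ _) hρ₂)
        (mul_ne_zero (by simp [ne_of_gt hs0]) h0)
      refine ⟨((s:ℝ):ℂ)⁻¹, f, h1, h2, h3, h4, ?_, fun h => absurd h hX⟩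
      rw [h5]
      have hsne : ((s:ℝ):ℂ) ≠ 0 := by simp [ne_of_gt hs0]
      rw [Prod.smul_mk, smul_eq_mul, smul_eq_mul, Prod.ext_iff]
      constructor <;> · simp only; field_simp
    · obtain ⟨d1, m1, _, e1, _⟩ := affine_witness D₁ hball₁ ((s:ℂ) * X.1)
        (hkey X.1 (by linarith [norm_nonneg X.2]) ρ₁ (min_le_left _ _) hρ₁)
      obtain ⟨d2, m2, i2, e2, _⟩ := affine_witness D₂ hball₂ ((s:ℂ) * X.2)
        (hkey X.2 (by linarith [norm_nonneg X.1]) ρ₂ (min_le_right _ _) hρ₂)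
      have hc₂0 : ((s:ℂ) * X.2) ≠ 0 := mul_ne_zero (by simp [ne_of_gt hs0]) h0
      refine ⟨((s:ℝ):ℂ)⁻¹, fun ζ => (z.1 + (s:ℂ) * X.1 * ζ, z.2 + (s:ℂ) * X.2 * ζ),
        DifferentiableOn.prodMk d1 d2, fun ζ hζ => mem_prod.mpr ⟨m1 hζ, m2 hζ⟩,
        ?_, by simp, ?_, fun h => absurd h hX⟩
      · intro a ha b hb hab
        rw [Prod.mk.injEq] at hab
        exact i2 hc₂0 ha hb hab.2
      · rw [(((hasDerivAt_linear _).const_add z.1).prodMk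
          ((hasDerivAt_linear _).const_add z.2)).deriv]
        have hsne : ((s:ℝ):ℂ) ≠ 0 := by simp [ne_of_gt hs0]
        rw [Prod.smul_mk, smul_eq_mul, smul_eq_mul, Prod.ext_iff]
        constructor <;> · simp only; field_simp

section helpers
variable {V : Type*} [NormedAddCommGroup V] [NormedSpace ℂ V] {D : Set V} {z X : V}

lemma hahn_mem_le {α : ℂ} {f : ℂ → V}
    (hd : DifferentiableOn ℂ f unitDisc) (hm : MapsTo f unitDisc D)
    (hi : InjOn f unitDisc) (h0 : f 0 = z) (hX : α • deriv f 0 = X) :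
    hahn D z X ≤ ‖α‖ :=
  csInf_le ⟨0, fun r hr => by
      obtain ⟨β, g, hβ, _⟩ := hr
      rw [← hβ]; exact norm_nonneg β⟩
    ⟨α, f, rfl, hd, hm, hi, h0, hX⟩

lemma kob_mem_le {α : ℂ} {f : ℂ → V}
    (hd : DifferentiableOn ℂ f unitDisc) (hm : MapsTo f unitDisc D)
    (h0 : f 0 = z) (hX : α • deriv f 0 = X) :
    kobayashi D z X ≤ ‖α‖ :=
  csInf_le ⟨0, fun r hr => by
      obtain ⟨β, g, hβ, _⟩ := hr
      rw [← hβ]; exact norm_nonneg β⟩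
    ⟨α, f, rfl, hd, hm, h0, hX⟩

lemma kob_nonneg {α : ℂ} {f : ℂ → V}
    (hd : DifferentiableOn ℂ f unitDisc) (hm : MapsTo f unitDisc D)
    (h0 : f 0 = z) (hX : α • deriv f 0 = X) :
    0 ≤ kobayashi D z X :=
  le_csInf ⟨‖α‖, α, f, rfl, hd, hm, h0, hX⟩ fun r hr => by
    obtain ⟨β, g, hβ, _⟩ := hr
    rw [← hβ]; exact norm_nonneg β

end helpers

/-- If `h_{D₁} ≡ κ_{D₁}` on a domain `D₁ ⊆ ℂ`, then for every domain `D₂ ⊆ ℂ`,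
`h_{D₁×D₂} ≡ κ_{D₁×D₂}`. -/
theorem stmt4 (D₁ : Set ℂ) (hD₁ : IsOpen D₁ ∧ IsConnected D₁)
    (heq : ∀ z ∈ D₁, ∀ X : ℂ, hahn D₁ z X = kobayashi D₁ z X) :
    ∀ D₂ : Set ℂ, IsOpen D₂ ∧ IsConnected D₂ →
      ∀ z ∈ D₁ ×ˢ D₂, ∀ X : ℂ × ℂ,
        hahn (D₁ ×ˢ D₂) z X = kobayashi (D₁ ×ˢ D₂) z X := by
  obtain ⟨hD₁o, -⟩ := hD₁
  rintro D₂ ⟨hD₂o, -⟩ z hz X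
  have hz1 : z.1 ∈ D₁ := (mem_prod.mp hz).1
  have hUopen : IsOpen unitDisc := isOpen_ball
  obtain ⟨α₀, f₀, hf₀d, hf₀m, hf₀i, hf₀0, hf₀X, hf₀z⟩ := nonempty2 D₁ D₂ hD₁o hD₂o hz X
  have hKleH : kobayashi (D₁ ×ˢ D₂) z X ≤ hahn (D₁ ×ˢ D₂) z X := by
    apply csInf_le_csInf
    · exact ⟨0, fun r hr => by
        obtain ⟨β, g, hβ, _⟩ := hr
        rw [← hβ]; exact norm_nonneg β⟩
    · exact ⟨‖α₀‖, α₀, f₀, rfl, hf₀d, hf₀m, hf₀i, hf₀0, hf₀X⟩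
    · rintro r ⟨β, g, hβ, hgd, hgm, hgi, hg0, hgX⟩
      exact ⟨β, g, hβ, hgd, hgm, hg0, hgX⟩
  by_cases hX0 : X = 0
  · have h1 : hahn (D₁ ×ˢ D₂) z X ≤ 0 := by
      have h := hahn_mem_le hf₀d hf₀m hf₀i hf₀0 hf₀X
      rwa [hf₀z hX0, norm_zero] at h
    have h2 : 0 ≤ kobayashi (D₁ ×ˢ D₂) z X := kob_nonneg hf₀d hf₀m hf₀0 hf₀X
    linarith
  refine le_antisymm ?_ hKleH
  refine le_of_forall_pos_le_add fun ε hε => ?_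
  have hKne : {r : ℝ | ∃ (α : ℂ) (f : ℂ → ℂ × ℂ), ‖α‖ = r ∧
      DifferentiableOn ℂ f unitDisc ∧ MapsTo f unitDisc (D₁ ×ˢ D₂) ∧
      f 0 = z ∧ α • deriv f 0 = X}.Nonempty :=
    ⟨‖α₀‖, α₀, f₀, rfl, hf₀d, hf₀m, hf₀0, hf₀X⟩
  have hlt : kobayashi (D₁ ×ˢ D₂) z X < kobayashi (D₁ ×ˢ D₂) z X + ε/2 := by linarith
  obtain ⟨r, hrmem, hrlt⟩ := exists_lt_of_csInf_lt hKne hlt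
  obtain ⟨α, f, hα, hdiff, hmaps, hf0, hsmul⟩ := hrmem
  have hfA : DifferentiableAt ℂ f 0 := hdiff.differentiableAt (hUopen.mem_nhds zero_mem_unitDisc)
  have hdf : HasDerivAt f (deriv f 0) 0 := hfA.hasDerivAt
  have hX1eq : α * (deriv f 0).1 = X.1 := by
    simpa [smul_eq_mul] using congrArg Prod.fst hsmul
  have hX2eq : α * (deriv f 0).2 = X.2 := by
    simpa [smul_eq_mul] using congrArg Prod.snd hsmul
  have hdf2 : HasDerivAt (fun ζ => (f ζ).2) (deriv f 0).2 0 := hasDerivAt_snd' hdf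
  have hr0 : 0 ≤ r := hα ▸ norm_nonneg α
  have key : ∃ b, hahn (D₁ ×ˢ D₂) z X ≤ b ∧ b < r + ε/2 := by
    by_cases hX1 : X.1 = 0
    · -- Branch A : X.1 = 0, use the graph trick
      have hX2ne : X.2 ≠ 0 := by
        intro h
        exact hX0 (Prod.ext hX1 h)
      have hαne : α ≠ 0 := fun h => hX2ne (by rw [← hX2eq, h, zero_mul])
      have hrpos : 0 < r := hα ▸ norm_pos_iff.mpr hαne
      have hd₂ne : (deriv f 0).2 ≠ 0 := fun h => hX2ne (by rw [← hX2eq, h, mul_zero])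
      set t : ℝ := r / (r + ε/4) with ht
      have ht0 : 0 < t := by positivity
      have ht1 : t < 1 := by
        rw [ht, div_lt_one (by linarith)]; linarith
      have htne : ((t:ℝ):ℂ) ≠ 0 := by
        simp only [ne_eq, Complex.ofReal_eq_zero]; exact ne_of_gt ht0
      set β : ℂ := α / (t:ℂ) with hβ
      have hβabs : ‖β‖ = r + ε/4 := by
        rw [hβ, norm_div, Complex.norm_real, Real.norm_eq_abs, abs_of_pos ht0, hα, ht]
        rw [div_div_eq_mul_div, div_eq_iff (ne_of_gt hrpos)]
        ring
      obtain ⟨ρ, hρ, hball⟩ := Metric.isOpen_iff.mp hD₁o z.1 hz1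
      have htabs : ‖((t:ℝ):ℂ)‖ ≤ 1 := by
        rw [Complex.norm_real, Real.norm_eq_abs, abs_of_pos ht0]; linarith
      have htmem : ∀ ζ ∈ unitDisc, ((t:ℝ):ℂ) * ζ ∈ unitDisc := fun ζ hζ => mul_mapsTo htabs hζ
      have hsub : closedBall (0:ℂ) t ⊆ unitDisc := by
        intro w hw
        rw [mem_closedBall, dist_zero_right] at hw
        rw [mem_unitDisc]
        exact lt_of_le_of_lt (by simpa using hw) ht1
      have hcont : ContinuousOn (fun ζ => (f ζ).2) (closedBall (0:ℂ) t) :=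
        (hdiff.snd.continuousOn).mono hsub
      obtain ⟨M, hM⟩ := (isCompact_closedBall (0:ℂ) t).exists_bound_of_continuousOn hcont
      have hM0 : 0 ≤ M :=
        le_trans (norm_nonneg _) (hM 0 (by simp [mem_closedBall, le_of_lt ht0]))
      set K : ℝ := M + ‖z.2‖ + ‖(deriv f 0).2‖ + 1 with hK
      have hKpos : 0 < K := by positivity
      set δ : ℝ := ρ / (2*K) with hδ
      have hδ0 : 0 < δ := by positivity
      have hδc : ((δ:ℝ):ℂ) ≠ 0 := by
        simp only [ne_eq, Complex.ofReal_eq_zero]; exact ne_of_gt hδ0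
      set G : ℂ → ℂ := fun ζ => (f (((t:ℝ):ℂ) * ζ)).2 with hG
      have hGd : DifferentiableOn ℂ G unitDisc :=
        hdiff.snd.comp ((differentiable_id.const_mul ((t:ℝ):ℂ)).differentiableOn)
          (mul_mapsTo htabs)
      have hGderiv : HasDerivAt G ((deriv f 0).2 * ((t:ℝ):ℂ)) 0 :=
        hasDerivAt_comp_linear hdf2 ((t:ℝ):ℂ)
      have hGbound : ∀ ζ ∈ unitDisc, ‖(G ζ)‖ ≤ M := by
        intro ζ hζ
        rw [mem_unitDisc] at hζ
        have hmem : ((t:ℝ):ℂ) * ζ ∈ closedBall (0:ℂ) t := by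
          rw [mem_closedBall, dist_zero_right]
          rw [norm_mul, Complex.norm_real, Real.norm_eq_abs, abs_of_pos ht0]
          nlinarith [norm_nonneg ζ]
        simpa [hG] using hM _ hmem
      -- the map
      set F₁ : ℂ → ℂ := fun ζ => z.1 + ((δ:ℝ):ℂ) * (G ζ - z.2 - ((t:ℝ):ℂ) * (deriv f 0).2 * ζ)
        with hF₁
      set F : ℂ → ℂ × ℂ := fun ζ => (F₁ ζ, G ζ) with hF
      have hinner : ∀ ζ ∈ unitDisc,
          ‖(G ζ - z.2 - ((t:ℝ):ℂ) * (deriv f 0).2 * ζ)‖ < K := by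
        intro ζ hζ
        have h1 : ‖(G ζ - z.2 - ((t:ℝ):ℂ) * (deriv f 0).2 * ζ)‖
            ≤ ‖(G ζ)‖ + ‖z.2‖
              + ‖(((t:ℝ):ℂ) * (deriv f 0).2 * ζ)‖ := by
          calc ‖(G ζ - z.2 - ((t:ℝ):ℂ) * (deriv f 0).2 * ζ)‖
              ≤ ‖(G ζ - z.2)‖ + ‖(((t:ℝ):ℂ) * (deriv f 0).2 * ζ)‖ :=
                norm_sub_le _ _
            _ ≤ ‖(G ζ)‖ + ‖z.2‖
                + ‖(((t:ℝ):ℂ) * (deriv f 0).2 * ζ)‖ := by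
                have := norm_sub_le (G ζ) z.2
                linarith
        have h2 : ‖(((t:ℝ):ℂ) * (deriv f 0).2 * ζ)‖
            ≤ ‖(deriv f 0).2‖ := by
          rw [norm_mul, norm_mul, Complex.norm_real, Real.norm_eq_abs, abs_of_pos ht0]
          rw [mem_unitDisc] at hζ
          calc t * ‖(deriv f 0).2‖ * ‖ζ‖
              ≤ t * ‖(deriv f 0).2‖ * 1 :=
                mul_le_mul_of_nonneg_left hζ.le (by positivity)
            _ = t * ‖(deriv f 0).2‖ := mul_one _
            _ ≤ 1 * ‖(deriv f 0).2‖ :=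
                mul_le_mul_of_nonneg_right ht1.le (norm_nonneg _)
            _ = ‖(deriv f 0).2‖ := one_mul _
        have h3 := hGbound ζ hζ
        rw [hK]
        linarith
      have hFd : DifferentiableOn ℂ F unitDisc := by
        apply DifferentiableOn.prodMk _ hGd
        apply DifferentiableOn.const_add
        apply DifferentiableOn.const_mul
        apply DifferentiableOn.sub
        apply DifferentiableOn.sub_const hGd
        exact (differentiable_id.const_mul _).differentiableOn
      have hFm : MapsTo F unitDisc (D₁ ×ˢ D₂) := by
        intro ζ hζ
        refine mem_prod.mpr ⟨hball ?_, (mem_prod.mp (hmaps (htmem ζ hζ))).2⟩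
        rw [mem_ball]
        show dist (z.1 + ((δ:ℝ):ℂ) * (G ζ - z.2 - ((t:ℝ):ℂ) * (deriv f 0).2 * ζ)) z.1 < ρ
        rw [dist_eq, add_sub_cancel_left, norm_mul, Complex.norm_real, Real.norm_eq_abs, abs_of_pos hδ0]
        have hδK : δ * K = ρ / 2 := by
          rw [hδ]
          field_simp
        calc δ * ‖(G ζ - z.2 - ((t:ℝ):ℂ) * (deriv f 0).2 * ζ)‖
            ≤ δ * K := mul_le_mul_of_nonneg_left (hinner ζ hζ).le hδ0.le
          _ = ρ / 2 := hδK
          _ < ρ := by linarith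
      have hFi : InjOn F unitDisc := by
        intro a ha b hb hab
        rw [hF, Prod.mk.injEq] at hab
        obtain ⟨hab1, hab2⟩ := hab
        rw [hF₁] at hab1
        simp only at hab1
        rw [hab2] at hab1
        have h4 : ((δ:ℝ):ℂ) * (((t:ℝ):ℂ) * (deriv f 0).2) * (b - a) = 0 := by
          linear_combination hab1
        rcases mul_eq_zero.mp h4 with h5 | h5
        · exact absurd h5 (mul_ne_zero hδc (mul_ne_zero htne hd₂ne))
        · exact (sub_eq_zero.mp h5).symm
      have hF0 : F 0 = z := by
        have hG0 : G 0 = z.2 := by rw [hG]; simp [hf0]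
        rw [hF]
        simp only
        rw [hF₁]
        simp only [mul_zero, hG0]
        simp
      have hFX : β • deriv F 0 = X := by
        have hdF₁ : HasDerivAt F₁ 0 0 := by
          have h6 : HasDerivAt (fun ζ : ℂ => G ζ - z.2 - ((t:ℝ):ℂ) * (deriv f 0).2 * ζ)
              ((deriv f 0).2 * ((t:ℝ):ℂ) - ((t:ℝ):ℂ) * (deriv f 0).2) 0 :=
            (hGderiv.sub_const z.2).sub (hasDerivAt_linear (((t:ℝ):ℂ) * (deriv f 0).2))
          have h7 := (h6.const_mul ((δ:ℝ):ℂ)).const_add z.1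
          have h8 : ((δ:ℝ):ℂ) * ((deriv f 0).2 * ((t:ℝ):ℂ) - ((t:ℝ):ℂ) * (deriv f 0).2) = 0 := by
            ring
          rwa [h8] at h7
        have hdF : deriv F 0 = (0, (deriv f 0).2 * ((t:ℝ):ℂ)) := (hdF₁.prodMk hGderiv).deriv
        rw [hdF, Prod.smul_mk, smul_eq_mul, smul_eq_mul, mul_zero]
        rw [Prod.ext_iff]
        refine ⟨hX1.symm, ?_⟩
        show β * ((deriv f 0).2 * ((t:ℝ):ℂ)) = X.2
        rw [hβ, ← hX2eq]
        field_simp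
      refine ⟨r + ε/4, ?_, by linarith⟩
      rw [← hβabs]
      exact hahn_mem_le hFd hFm hFi hF0 hFX
    · -- Branch B : X.1 ≠ 0, use the hypothesis on D₁
      have hαne : α ≠ 0 := fun h => hX1 (by rw [← hX1eq, h, zero_mul])
      have hrpos : 0 < r := hα ▸ norm_pos_iff.mpr hαne
      have hdf1 : HasDerivAt (fun ζ => (f ζ).1) (deriv f 0).1 0 := hasDerivAt_fst' hdf
      have hκ₁ : kobayashi D₁ z.1 X.1 ≤ r := by
        rw [← hα]
        exact kob_mem_le hdiff.fst (fun ζ hζ => (mem_prod.mp (hmaps hζ)).1)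
          (by rw [hf0]) (by rw [hdf1.deriv, smul_eq_mul]; exact hX1eq)
      have hH1lt : hahn D₁ z.1 X.1 < r + ε/8 := by
        rw [heq z.1 hz1 X.1]; linarith
      obtain ⟨α₁, u₁, hu₁d, hu₁m, hu₁i, hu₁0, hu₁X, -⟩ := nonempty1 D₁ hD₁o hz1 X.1
      have hne1 : {r' : ℝ | ∃ (α : ℂ) (g : ℂ → ℂ), ‖α‖ = r' ∧
          DifferentiableOn ℂ g unitDisc ∧ MapsTo g unitDisc D₁ ∧ InjOn g unitDisc ∧
          g 0 = z.1 ∧ α • deriv g 0 = X.1}.Nonempty :=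
        ⟨‖α₁‖, α₁, u₁, rfl, hu₁d, hu₁m, hu₁i, hu₁0, hu₁X⟩
      obtain ⟨r', hr'mem, hr'lt⟩ := exists_lt_of_csInf_lt hne1 hH1lt
      obtain ⟨α', u, hα'abs, hud, hum, hui, hu0, huX⟩ := hr'mem
      have hα'ne : α' ≠ 0 := fun h => hX1 (by rw [← huX, h, zero_smul])
      have huX' : α' * deriv u 0 = X.1 := by rwa [smul_eq_mul] at huX
      set m : ℝ := max r (‖α'‖) with hm
      have hmlt : m < r + ε/8 := max_lt (by linarith) (by rw [hα'abs]; exact hr'lt)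
      have hm0 : 0 < m := lt_of_lt_of_le hrpos (le_max_left _ _)
      set b : ℝ := m + ε/8 with hb
      have hb_pos : 0 < b := by positivity
      set β : ℂ := α * ((b/r : ℝ) : ℂ) with hβ
      have hβabs : ‖β‖ = b := by
        rw [hβ, norm_mul, Complex.norm_real, Real.norm_eq_abs, hα, abs_of_pos (by positivity)]
        field_simp
      have hβne : β ≠ 0 := by
        rw [hβ]
        refine mul_ne_zero hαne ?_
        simp only [ne_eq, Complex.ofReal_eq_zero]
        positivity
      set c₁ : ℂ := α' / β with hc₁
      set c₂ : ℂ := α / β with hc₂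
      have hc₁abs : ‖c₁‖ ≤ 1 := by
        rw [hc₁, norm_div, hβabs, div_le_one hb_pos, hα'abs]
        calc r' = ‖α'‖ := hα'abs.symm
          _ ≤ m := le_max_right _ _
          _ ≤ b := by rw [hb]; linarith
      have hc₂abs : ‖c₂‖ ≤ 1 := by
        rw [hc₂, norm_div, hβabs, div_le_one hb_pos, hα]
        calc r ≤ m := le_max_left _ _
          _ ≤ b := by rw [hb]; linarith
      have hc₁ne : c₁ ≠ 0 := div_ne_zero hα'ne hβne
      set F : ℂ → ℂ × ℂ := fun ζ => (u (c₁ * ζ), (f (c₂ * ζ)).2) with hF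
      have hFd : DifferentiableOn ℂ F unitDisc := by
        apply DifferentiableOn.prodMk
        · exact hud.comp ((differentiable_id.const_mul c₁).differentiableOn)
            (mul_mapsTo hc₁abs)
        · exact hdiff.snd.comp ((differentiable_id.const_mul c₂).differentiableOn)
            (mul_mapsTo hc₂abs)
      have hFm : MapsTo F unitDisc (D₁ ×ˢ D₂) := fun ζ hζ =>
        mem_prod.mpr ⟨hum (mul_mapsTo hc₁abs hζ),
          (mem_prod.mp (hmaps (mul_mapsTo hc₂abs hζ))).2⟩
      have hFi : InjOn F unitDisc := by
        intro a ha b' hb' hab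
        rw [hF, Prod.mk.injEq] at hab
        have := hui (mul_mapsTo hc₁abs ha) (mul_mapsTo hc₁abs hb') hab.1
        exact mul_left_cancel₀ hc₁ne this
      have hF0 : F 0 = z := by
        rw [hF]
        simp only [mul_zero, hu0, hf0]
      have hdu : HasDerivAt u (deriv u 0) 0 :=
        (hud.differentiableAt (hUopen.mem_nhds zero_mem_unitDisc)).hasDerivAt
      have h1 : HasDerivAt (fun ζ => u (c₁ * ζ)) (deriv u 0 * c₁) 0 :=
        hasDerivAt_comp_linear hdu c₁
      have h2 : HasDerivAt (fun ζ => (f (c₂ * ζ)).2) ((deriv f 0).2 * c₂) 0 :=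
        hasDerivAt_comp_linear hdf2 c₂
      have hdF : deriv F 0 = (deriv u 0 * c₁, (deriv f 0).2 * c₂) := (h1.prodMk h2).deriv
      have hFX : β • deriv F 0 = X := by
        rw [hdF, Prod.smul_mk, smul_eq_mul, smul_eq_mul, Prod.ext_iff]
        constructor
        · show β * (deriv u 0 * c₁) = X.1
          rw [hc₁, ← huX']
          field_simp
        · show β * ((deriv f 0).2 * c₂) = X.2
          rw [hc₂, ← hX2eq]
          field_simp
      refine ⟨b, ?_, by rw [hb]; linarith⟩
      rw [← hβabs]
      exact hahn_mem_le hFd hFm hFi hF0 hFX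
  obtain ⟨b, hb1, hb2⟩ := key
  linarith
end
end

section
/- Let D₁, D₂ ⊆ ℂ be domains. For all a = (a₁,a₂) ∈ D₁×D₂ and X = (X₁,X₂) ∈ ℂ², the Kobayashi–Royden pseudometric of the product satisfies κ_{D₁×D₂}(a;X) = max{κ_{D₁}(a₁;X₁), κ_{D₂}(a₂;X₂)}. -/
open Set Metric Complex

noncomputable section

namespace Stmt9Aux

/-- The set whose infimum defines the Kobayashi pseudometric. -/
def kset {V : Type*} [NormedAddCommGroup V] [NormedSpace ℂ V]
    (D : Set V) (z X : V) : Set ℝ :=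
  {r : ℝ | ∃ (α : ℂ) (f : ℂ → V), ‖α‖ = r ∧
    DifferentiableOn ℂ f unitDisc ∧ MapsTo f unitDisc D ∧
    f 0 = z ∧ α • deriv f 0 = X}

lemma kobayashi_eq {V : Type*} [NormedAddCommGroup V] [NormedSpace ℂ V]
    (D : Set V) (z X : V) : kobayashi D z X = sInf (kset D z X) := rfl

lemma zero_mem_unitDisc : (0 : ℂ) ∈ unitDisc := by
  simp [unitDisc]

lemma isOpen_unitDisc : IsOpen unitDisc := isOpen_ball

lemma kset_nonneg {V : Type*} [NormedAddCommGroup V] [NormedSpace ℂ V]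
    {D : Set V} {z X : V} {r : ℝ} (hr : r ∈ kset D z X) : 0 ≤ r := by
  obtain ⟨α, f, hα, _⟩ := hr
  exact hα ▸ (norm_nonneg α)

lemma kset_bddBelow {V : Type*} [NormedAddCommGroup V] [NormedSpace ℂ V]
    (D : Set V) (z X : V) : BddBelow (kset D z X) :=
  ⟨0, fun _ hr => kset_nonneg hr⟩

lemma hasDerivAt_of_mem {V : Type*} [NormedAddCommGroup V] [NormedSpace ℂ V]
    {f : ℂ → V} (hf : DifferentiableOn ℂ f unitDisc) :
    HasDerivAt f (deriv f 0) 0 := by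
  have := (hf.differentiableAt (isOpen_unitDisc.mem_nhds zero_mem_unitDisc))
  exact this.hasDerivAt

/-- Nonemptiness of the defining set for an open set. -/
lemma kset_nonempty {D : Set ℂ} (hD : IsOpen D) {z : ℂ} (hz : z ∈ D) (X : ℂ) :
    (kset D z X).Nonempty := by
  obtain ⟨r, hr, hball⟩ := Metric.isOpen_iff.mp hD z hz
  have hr2 : (0:ℝ) < r / 2 := by linarith
  refine ⟨‖X / ((r:ℂ)/2)‖, X / ((r:ℂ)/2),
    fun w => z + ((r:ℂ)/2) * w, rfl, ?_, ?_, by simp, ?_⟩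
  · fun_prop
  · intro w hw
    apply hball
    have hw' : ‖w‖ < 1 := by
      simpa [unitDisc, Complex.dist_eq] using hw
    have : ‖((r:ℂ)/2) * w‖ < r := by
      rw [norm_mul]
      have h1 : ‖(r:ℂ)/2‖ = r / 2 := by
        rw [norm_div]
        simp [Complex.norm_real, abs_of_pos hr]
      rw [h1]
      nlinarith [norm_nonneg w]
    simpa [Complex.dist_eq, add_sub_cancel_left] using this
  · have hd : HasDerivAt (fun w => z + ((r:ℂ)/2) * w) ((r:ℂ)/2) 0 := by
      simpa using ((hasDerivAt_id (0:ℂ)).const_mul ((r:ℂ)/2)).const_add z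
    rw [hd.deriv]
    have : ((r:ℂ)/2) ≠ 0 := by
      simp only [ne_eq, div_eq_zero_iff, Complex.ofReal_eq_zero, OfNat.ofNat_ne_zero,
        or_false]
      exact ne_of_gt hr
    rw [smul_eq_mul, div_mul_cancel₀ X this]

lemma kset_subset_fst (D₁ D₂ : Set ℂ) (a X : ℂ × ℂ) :
    kset (D₁ ×ˢ D₂) a X ⊆ kset D₁ a.1 X.1 := by
  rintro r ⟨α, f, hα, hdiff, hmap, hf0, hder⟩
  refine ⟨α, fun w => (f w).1, hα, hdiff.fst, fun w hw => (hmap hw).1,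
    congrArg Prod.fst hf0, ?_⟩
  have hf := hasDerivAt_of_mem hdiff
  have h1 : HasDerivAt (fun w => (f w).1) (deriv f 0).1 0 := by
    simpa using (hf.hasFDerivAt.fst).hasDerivAt
  rw [h1.deriv]
  have := congrArg Prod.fst hder
  simpa using this

lemma kset_subset_snd (D₁ D₂ : Set ℂ) (a X : ℂ × ℂ) :
    kset (D₁ ×ˢ D₂) a X ⊆ kset D₂ a.2 X.2 := by
  rintro r ⟨α, f, hα, hdiff, hmap, hf0, hder⟩
  refine ⟨α, fun w => (f w).2, hα, hdiff.snd, fun w hw => (hmap hw).2,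
    congrArg Prod.snd hf0, ?_⟩
  have hf := hasDerivAt_of_mem hdiff
  have h1 : HasDerivAt (fun w => (f w).2) (deriv f 0).2 0 := by
    simpa using (hf.hasFDerivAt.snd).hasDerivAt
  rw [h1.deriv]
  have := congrArg Prod.snd hder
  simpa using this

lemma max_mem {D₁ D₂ : Set ℂ} {a₁ a₂ X₁ X₂ : ℂ} {r₁ r₂ : ℝ}
    (h₁ : r₁ ∈ kset D₁ a₁ X₁) (h₂ : r₂ ∈ kset D₂ a₂ X₂) :
    max r₁ r₂ ∈ kset (D₁ ×ˢ D₂) (a₁, a₂) (X₁, X₂) := by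
  obtain ⟨α₁, f₁, hα₁, hdiff₁, hmap₁, hf₁0, hder₁⟩ := h₁
  obtain ⟨α₂, f₂, hα₂, hdiff₂, hmap₂, hf₂0, hder₂⟩ := h₂
  set m : ℝ := max r₁ r₂ with hm
  have hm0 : 0 ≤ m := le_max_of_le_left (kset_nonneg ⟨α₁, f₁, hα₁, hdiff₁, hmap₁, hf₁0, hder₁⟩)
  rcases eq_or_lt_of_le hm0 with hm0' | hm0'
  · -- m = 0 : both α's are zero, so X₁ = X₂ = 0
    have hr₁0 : r₁ = 0 := le_antisymm (le_trans (le_max_left _ _) hm0'.symm.le)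
      (kset_nonneg ⟨α₁, f₁, hα₁, hdiff₁, hmap₁, hf₁0, hder₁⟩)
    have hr₂0 : r₂ = 0 := le_antisymm (le_trans (le_max_right _ _) hm0'.symm.le)
      (kset_nonneg ⟨α₂, f₂, hα₂, hdiff₂, hmap₂, hf₂0, hder₂⟩)
    have hα₁0 : α₁ = 0 := by
      rwa [hr₁0, norm_eq_zero] at hα₁
    have hα₂0 : α₂ = 0 := by
      rwa [hr₂0, norm_eq_zero] at hα₂
    have hX₁ : X₁ = 0 := by rw [← hder₁, hα₁0, zero_smul]
    have hX₂ : X₂ = 0 := by rw [← hder₂, hα₂0, zero_smul]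
    refine ⟨0, fun _ => (a₁, a₂), by simp [← hm0'], differentiableOn_const _,
      fun w hw => ?_, rfl, by simp [hX₁, hX₂, Prod.ext_iff]⟩
    · exact ⟨by rw [← hf₁0]; exact hmap₁ zero_mem_unitDisc,
        by rw [← hf₂0]; exact hmap₂ zero_mem_unitDisc⟩
  · -- m > 0
    have hmne : (m : ℂ) ≠ 0 := by
      simp only [ne_eq, Complex.ofReal_eq_zero]
      exact ne_of_gt hm0'
    set c₁ : ℂ := α₁ / m with hc₁
    set c₂ : ℂ := α₂ / m with hc₂
    have hc₁le : ‖c₁‖ ≤ 1 := by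
      rw [hc₁, norm_div, Complex.norm_real, Real.norm_eq_abs, abs_of_pos hm0', hα₁]
      exact div_le_one_of_le₀ (le_max_left _ _) hm0'.le
    have hc₂le : ‖c₂‖ ≤ 1 := by
      rw [hc₂, norm_div, Complex.norm_real, Real.norm_eq_abs, abs_of_pos hm0', hα₂]
      exact div_le_one_of_le₀ (le_max_right _ _) hm0'.le
    have hmapsE : ∀ (c : ℂ), ‖c‖ ≤ 1 →
        MapsTo (fun w => c * w) unitDisc unitDisc := by
      intro c hc w hw
      have hw' : ‖w‖ < 1 := by
        simpa [unitDisc, Complex.dist_eq] using hw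
      have : ‖c * w‖ < 1 := by
        rw [norm_mul]
        calc ‖c‖ * ‖w‖ ≤ 1 * ‖w‖ :=
              mul_le_mul_of_nonneg_right hc (norm_nonneg w)
          _ = ‖w‖ := one_mul _
          _ < 1 := hw'
      simpa [unitDisc, Complex.dist_eq] using this
    set g₁ : ℂ → ℂ := fun w => f₁ (c₁ * w) with hg₁
    set g₂ : ℂ → ℂ := fun w => f₂ (c₂ * w) with hg₂
    have hdg₁ : DifferentiableOn ℂ g₁ unitDisc :=
      hdiff₁.comp (by fun_prop) (hmapsE c₁ hc₁le)
    have hdg₂ : DifferentiableOn ℂ g₂ unitDisc :=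
      hdiff₂.comp (by fun_prop) (hmapsE c₂ hc₂le)
    have hderg₁ : HasDerivAt g₁ (deriv f₁ 0 * c₁) 0 := by
      have hu : HasDerivAt (fun w : ℂ => c₁ * w) c₁ 0 := by
        simpa using (hasDerivAt_id (0:ℂ)).const_mul c₁
      exact HasDerivAt.comp 0 (by rw [mul_zero]; exact hasDerivAt_of_mem hdiff₁) hu
    have hderg₂ : HasDerivAt g₂ (deriv f₂ 0 * c₂) 0 := by
      have hu : HasDerivAt (fun w : ℂ => c₂ * w) c₂ 0 := by
        simpa using (hasDerivAt_id (0:ℂ)).const_mul c₂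
      exact HasDerivAt.comp 0 (by rw [mul_zero]; exact hasDerivAt_of_mem hdiff₂) hu
    refine ⟨(m : ℂ), fun w => (g₁ w, g₂ w), by
      simp [Complex.norm_real, abs_of_pos hm0'], hdg₁.prodMk hdg₂,
      fun w hw => ⟨hmap₁ (hmapsE c₁ hc₁le hw), hmap₂ (hmapsE c₂ hc₂le hw)⟩,
      by simp [hg₁, hg₂, hf₁0, hf₂0], ?_⟩
    have hprod : HasDerivAt (fun w => (g₁ w, g₂ w))
        (deriv f₁ 0 * c₁, deriv f₂ 0 * c₂) 0 := hderg₁.prodMk hderg₂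
    rw [hprod.deriv]
    have e₁ : (m : ℂ) • (deriv f₁ 0 * c₁) = X₁ := by
      rw [← hder₁, hc₁]
      field_simp
      rw [smul_eq_mul, smul_eq_mul, mul_div_assoc', mul_div_cancel_left₀ _ hmne, mul_comm]
    have e₂ : (m : ℂ) • (deriv f₂ 0 * c₂) = X₂ := by
      rw [← hder₂, hc₂]
      field_simp
      rw [smul_eq_mul, smul_eq_mul, mul_div_assoc', mul_div_cancel_left₀ _ hmne, mul_comm]
    rw [Prod.smul_mk, e₁, e₂]

end Stmt9Aux

open Stmt9Aux in
/-- Product formula for the Kobayashi–Royden pseudometric: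
`κ_{D₁×D₂}(a;X) = max (κ_{D₁}(a₁;X₁)) (κ_{D₂}(a₂;X₂))`. -/
theorem stmt9 (D₁ D₂ : Set ℂ) (hD₁ : IsOpen D₁ ∧ IsConnected D₁)
    (hD₂ : IsOpen D₂ ∧ IsConnected D₂) :
    ∀ a ∈ D₁ ×ˢ D₂, ∀ X : ℂ × ℂ,
      kobayashi (D₁ ×ˢ D₂) a X = max (kobayashi D₁ a.1 X.1) (kobayashi D₂ a.2 X.2) := by
  rintro ⟨a₁, a₂⟩ ⟨ha₁, ha₂⟩ ⟨X₁, X₂⟩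
  simp only [kobayashi_eq]
  have hne₁ := kset_nonempty hD₁.1 ha₁ X₁
  have hne₂ := kset_nonempty hD₂.1 ha₂ X₂
  obtain ⟨s₁, hs₁⟩ := hne₁
  obtain ⟨s₂, hs₂⟩ := hne₂
  have hneS : (kset (D₁ ×ˢ D₂) (a₁, a₂) (X₁, X₂)).Nonempty :=
    ⟨max s₁ s₂, max_mem hs₁ hs₂⟩
  apply le_antisymm
  · apply le_of_forall_pos_le_add
    intro ε hε
    obtain ⟨t₁, ht₁, ht₁'⟩ := Real.lt_sInf_add_pos ⟨s₁, hs₁⟩ hε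
    obtain ⟨t₂, ht₂, ht₂'⟩ := Real.lt_sInf_add_pos ⟨s₂, hs₂⟩ hε
    have hmem := max_mem ht₁ ht₂
    calc sInf (kset (D₁ ×ˢ D₂) (a₁, a₂) (X₁, X₂)) ≤ max t₁ t₂ :=
          csInf_le (kset_bddBelow _ _ _) hmem
      _ ≤ max (sInf (kset D₁ a₁ X₁) + ε) (sInf (kset D₂ a₂ X₂) + ε) :=
          max_le_max ht₁'.le ht₂'.le
      _ = max (sInf (kset D₁ a₁ X₁)) (sInf (kset D₂ a₂ X₂)) + ε :=
          (max_add_add_right _ _ _)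
  · refine max_le ?_ ?_
    · exact csInf_le_csInf (kset_bddBelow _ _ _) hneS (kset_subset_fst D₁ D₂ _ _)
    · exact csInf_le_csInf (kset_bddBelow _ _ _) hneS (kset_subset_snd D₁ D₂ _ _)
end
end

section
/- Let ψ be a holomorphic automorphism of the unit disc E having no fixed points in E. Then sup_{z ∈ E} m(z, ψ(z)) = 1, where m(z,w) := |(z − w)/(1 − z·conj(w))| is the Möbius distance on E. -/
open Set Metric Complex

noncomputable section

/-- An automorphism of the unit disc: a biholomorphic map of `E` onto itself. -/
def IsDiscAut (φ : ℂ → ℂ) : Prop :=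
  DifferentiableOn ℂ φ unitDisc ∧ MapsTo φ unitDisc unitDisc ∧
  ∃ ψ : ℂ → ℂ, DifferentiableOn ℂ ψ unitDisc ∧ MapsTo ψ unitDisc unitDisc ∧
    (∀ z ∈ unitDisc, ψ (φ z) = z) ∧ (∀ z ∈ unitDisc, φ (ψ z) = z)

/-! ### Auxiliary lemmas -/

lemma normSq_key (z w : ℂ) :
    Complex.normSq (1 - z * (starRingEnd ℂ) w) - Complex.normSq (z - w)
      = (1 - Complex.normSq z) * (1 - Complex.normSq w) := by
  simp [Complex.normSq_apply, Complex.sub_re, Complex.sub_im, Complex.mul_re, Complex.mul_im,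
    Complex.one_re, Complex.one_im]
  ring

lemma abs_key {z w : ℂ} (hz : ‖z‖ < 1) (hw : ‖w‖ < 1) :
    ‖z - w‖ < ‖1 - z * (starRingEnd ℂ) w‖ := by
  have hz' : Complex.normSq z < 1 := by
    have := Complex.sq_norm z; nlinarith [norm_nonneg z]
  have hw' : Complex.normSq w < 1 := by
    have := Complex.sq_norm w; nlinarith [norm_nonneg w]
  have key := normSq_key z w
  have h2 : Complex.normSq (z - w) < Complex.normSq (1 - z * (starRingEnd ℂ) w) := by nlinarith
  have := Complex.sq_norm (z - w)
  have := Complex.sq_norm (1 - z * (starRingEnd ℂ) w)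
  nlinarith [norm_nonneg (z - w), norm_nonneg (1 - z * (starRingEnd ℂ) w)]

/-- The standard Möbius involution `z ↦ (a - z)/(1 - ā z)`. -/
def mob (a z : ℂ) : ℂ := (a - z) / (1 - (starRingEnd ℂ) a * z)

lemma mob_denom_ne {a z : ℂ} (ha : ‖a‖ < 1) (hz : ‖z‖ ≤ 1) :
    1 - (starRingEnd ℂ) a * z ≠ 0 := by
  intro h
  have h1 : (starRingEnd ℂ) a * z = 1 := by linear_combination -h
  have : ‖(starRingEnd ℂ) a * z‖ = 1 := by rw [h1]; simp
  rw [norm_mul, Complex.norm_conj] at this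
  nlinarith [norm_nonneg a, norm_nonneg z]

lemma conj_flip (a z : ℂ) :
    ‖1 - (starRingEnd ℂ) a * z‖ = ‖1 - a * (starRingEnd ℂ) z‖ := by
  rw [← Complex.norm_conj (1 - a * (starRingEnd ℂ) z)]
  simp [map_sub, map_mul]

lemma mob_maps {a z : ℂ} (ha : ‖a‖ < 1) (hz : ‖z‖ < 1) :
    ‖mob a z‖ < 1 := by
  have h := abs_key ha hz
  rw [mob, norm_div, div_lt_one] <;> rw [conj_flip]
  · exact h
  · exact lt_of_le_of_lt (norm_nonneg (a - z)) h

lemma mob_invol {a z : ℂ} (ha : ‖a‖ < 1) (hz : ‖z‖ < 1) :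
    mob a (mob a z) = z := by
  have h1 : 1 - (starRingEnd ℂ) a * z ≠ 0 := mob_denom_ne ha hz.le
  have h2 : 1 - (starRingEnd ℂ) a * mob a z ≠ 0 := mob_denom_ne ha (mob_maps ha hz).le
  simp only [mob] at h2 ⊢
  field_simp at h2 ⊢
  rw [div_eq_iff (by intro h0; apply h2; rw [h0, zero_div])]
  ring

lemma mob_diff {a : ℂ} (ha : ‖a‖ < 1) :
    DifferentiableOn ℂ (mob a) (Metric.ball 0 1) := by
  intro z hz
  rw [mem_ball_zero_iff] at hz
  apply DifferentiableWithinAt.div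
  · fun_prop
  · fun_prop
  · exact mob_denom_ne ha hz.le

/-- On the unit circle, `mob a` has modulus one. -/
lemma mob_abs_one {a u : ℂ} (ha : ‖a‖ < 1) (hu : ‖u‖ = 1) :
    ‖mob a u‖ = 1 := by
  have hden : ‖1 - (starRingEnd ℂ) a * u‖ = ‖a - u‖ := by
    rw [conj_flip]
    have huu : u * (starRingEnd ℂ) u = 1 := by
      rw [Complex.mul_conj]
      norm_cast
      rw [← Complex.sq_norm, hu]; norm_num
    have : (1 - a * (starRingEnd ℂ) u) * u = u - a := by
      have : a * ((starRingEnd ℂ) u * u) = a := by rw [mul_comm ((starRingEnd ℂ) u) u, huu, mul_one]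
      linear_combination -this
    calc ‖1 - a * (starRingEnd ℂ) u‖
        = ‖1 - a * (starRingEnd ℂ) u‖ * ‖u‖ := by rw [hu, mul_one]
      _ = ‖(1 - a * (starRingEnd ℂ) u) * u‖ := (norm_mul _ _).symm
      _ = ‖u - a‖ := by rw [this]
      _ = ‖a - u‖ := by rw [norm_sub_rev]
  have hne : ‖a - u‖ ≠ 0 := by
    rw [ne_eq, norm_eq_zero, sub_eq_zero]
    rintro rfl; rw [hu] at ha; exact lt_irrefl 1 ha
  rw [mob, norm_div, hden, div_self hne]

/-- A fixed-point-free boundary point exists. -/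
lemma exists_zeta {a lam : ℂ} (ha : ‖a‖ < 1) (ha0 : a ≠ 0)
    (hlam : ‖lam‖ = 1) :
    ∃ ζ : ℂ, ‖ζ‖ = 1 ∧ mob a (ζ * lam) ≠ ζ := by
  by_contra hc
  push_neg at hc
  have habs : ∀ ζ : ℂ, ‖ζ‖ = 1 → ‖ζ * lam‖ ≤ 1 := by
    intro ζ hζ; rw [norm_mul, hζ, hlam]; norm_num
  have key : ∀ ζ : ℂ, ‖ζ‖ = 1 →
      a - ζ * lam = ζ * (1 - (starRingEnd ℂ) a * (ζ * lam)) := by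
    intro ζ hζ
    have hd := mob_denom_ne ha (habs ζ hζ)
    have := hc ζ hζ
    rw [mob, div_eq_iff hd] at this
    exact this
  have e1 := key 1 (by simp)
  have e2 := key (-1) (by simp)
  have e3 := key Complex.I (by simp)
  apply ha0
  have hI : (Complex.I : ℂ) * Complex.I = -1 := Complex.I_mul_I
  linear_combination (e1 + e3) / 2 + (1 + Complex.I) / 4 * (e2 - e1) - ((starRingEnd ℂ) a * lam / 2) * hI

/-- If `ψ` is an automorphism of the unit disc without fixed points, then
`sup_{z ∈ E} m(z, ψ(z)) = 1`, where `m` is the Möbius distance. -/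
theorem stmt11 (ψ : ℂ → ℂ) (hψ : IsDiscAut ψ) (hfix : ∀ z ∈ unitDisc, ψ z ≠ z) :
    sSup ((fun z => ‖(z - ψ z) / (1 - z * (starRingEnd ℂ) (ψ z))‖) ''
      unitDisc) = 1 := by
  obtain ⟨hdψ, hmψ, χ, hdχ, hmχ, hl, hr⟩ := hψ
  have hmem : ∀ z : ℂ, z ∈ unitDisc ↔ ‖z‖ < 1 := by
    intro z; rw [unitDisc, mem_ball_zero_iff]
  have h0E : (0 : ℂ) ∈ unitDisc := by rw [hmem]; simp
  set a := ψ 0 with ha_def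
  have ha : ‖a‖ < 1 := (hmem a).1 (hmψ h0E)
  have ha0 : a ≠ 0 := hfix 0 h0E
  -- the normalized map h = mob a ∘ ψ
  set h : ℂ → ℂ := fun z => mob a (ψ z) with hh_def
  have hUD : unitDisc = Metric.ball (0:ℂ) 1 := rfl
  have hd_h : DifferentiableOn ℂ h (Metric.ball 0 1) := by
    exact (mob_diff ha).comp (hUD ▸ hdψ) (fun z hz => by
      rw [← hUD] at hz ⊢; exact hmψ hz)
  have hm_h : MapsTo h (Metric.ball 0 1) (Metric.ball 0 1) := by
    intro z hz
    rw [mem_ball_zero_iff]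
    exact mob_maps ha ((hmem _).1 (hmψ (hUD ▸ hz)))
  have h00 : h 0 = 0 := by simp [hh_def, mob, ha_def]
  -- the inverse map k = χ ∘ mob a
  set k : ℂ → ℂ := fun z => χ (mob a z) with hk_def
  have hd_k : DifferentiableOn ℂ k (Metric.ball 0 1) := by
    exact (hUD ▸ hdχ).comp (mob_diff ha) (fun z hz => by
      rw [mem_ball_zero_iff] at hz
      have := mob_maps ha hz
      rw [← hUD]
      exact (hmem _).2 this)
  have hm_k : MapsTo k (Metric.ball 0 1) (Metric.ball 0 1) := by
    intro z hz
    rw [mem_ball_zero_iff] at hz ⊢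
    exact (hmem _).1 (hmχ ((hmem _).2 (mob_maps ha hz)))
  have k00 : k 0 = 0 := by
    have : mob a 0 = a := by simp [mob]
    rw [hk_def]; simp only [this]
    exact hl 0 h0E
  have hkh : ∀ z ∈ unitDisc, k (h z) = z := by
    intro z hz
    have hψz : ‖ψ z‖ < 1 := (hmem _).1 (hmψ hz)
    simp only [hk_def, hh_def]
    rw [mob_invol ha hψz]
    exact hl z hz
  -- |h z| = |z|
  have habs_h : ∀ z ∈ unitDisc, ‖h z‖ = ‖z‖ := by
    intro z hz
    have hz' : ‖z‖ < 1 := (hmem z).1 hz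
    have le1 : ‖h z‖ ≤ ‖z‖ :=
      Complex.norm_le_norm_of_mapsTo_ball hd_h (hm_h.mono_right ball_subset_closedBall) h00 hz'
    have hhz : ‖h z‖ < 1 := by
      have := hm_h (show z ∈ Metric.ball (0:ℂ) 1 from hUD ▸ hz)
      rwa [mem_ball_zero_iff] at this
    have le2 : ‖k (h z)‖ ≤ ‖h z‖ :=
      Complex.norm_le_norm_of_mapsTo_ball hd_k (hm_k.mono_right ball_subset_closedBall) k00 hhz
    rw [hkh z hz] at le2
    exact le_antisymm le1 le2
  -- h is linear: h z = z * lam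
  have hhalf : (1/2 : ℂ) ∈ unitDisc := by rw [hmem]; simp; norm_num
  set lam : ℂ := dslope h 0 (1/2) with hlam_def
  have hdsl : ‖dslope h 0 (1/2 : ℂ)‖ = 1 / 1 := by
    rw [dslope_of_ne h (by norm_num : (1/2 : ℂ) ≠ 0), slope_def_module, h00, sub_zero, sub_zero,
      norm_smul, norm_inv]
    have := habs_h (1/2) hhalf
    rw [this]
    have : ‖(1/2 : ℂ)‖ = 1/2 := by
      rw [norm_div]; simp
    rw [this]; norm_num
  have hlin : ∀ z ∈ unitDisc, h z = z * lam := by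
    intro z hz
    have := Complex.affine_of_mapsTo_ball_of_exists_norm_dslope_eq_div hd_h
      (by rw [h00]; exact hm_h.mono_right ball_subset_closedBall)
      (show (1/2 : ℂ) ∈ Metric.ball 0 1 from hUD ▸ hhalf) hdsl (hUD ▸ hz)
    rw [this]
    simp only [h00, zero_add, sub_zero, smul_eq_mul, ← hlam_def]
  have hlam1 : ‖lam‖ = 1 := by
    have h2 := hdsl
    rw [← hlam_def] at h2
    linarith
  -- formula for ψ
  have hψ_eq : ∀ z ∈ unitDisc, ψ z = mob a (z * lam) := by
    intro z hz
    have hψz : ‖ψ z‖ < 1 := (hmem _).1 (hmψ hz)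
    calc ψ z = mob a (mob a (ψ z)) := (mob_invol ha hψz).symm
      _ = mob a (h z) := rfl
      _ = mob a (z * lam) := by rw [hlin z hz]
  -- find the boundary point
  obtain ⟨ζ, hζ1, hζfix⟩ := exists_zeta ha ha0 hlam1
  set F : ℂ → ℂ := fun z => mob a (z * lam) with hF_def
  set w : ℂ := F ζ with hw_def
  have hw1 : ‖w‖ = 1 := mob_abs_one ha (by rw [norm_mul, hζ1, hlam1, mul_one])
  have hwζ : w ≠ ζ := hζfix
  -- the Möbius-distance function via F
  set G : ℂ → ℝ := fun z => ‖(z - F z) / (1 - z * (starRingEnd ℂ) (F z))‖ with hG_def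
  have hGζ : G ζ = 1 := by
    have hww : w * (starRingEnd ℂ) w = 1 := by
      rw [Complex.mul_conj]; norm_cast; rw [← Complex.sq_norm, hw1]; norm_num
    have hden : (1 - ζ * (starRingEnd ℂ) w) = (starRingEnd ℂ) w * (w - ζ) := by
      linear_combination -hww
    have habs_den : ‖1 - ζ * (starRingEnd ℂ) w‖ = ‖w - ζ‖ := by
      rw [hden, norm_mul, Complex.norm_conj, hw1, one_mul]
    have hne : ‖w - ζ‖ ≠ 0 := by
      rw [ne_eq, norm_eq_zero, sub_eq_zero]; exact hwζ
    simp only [hG_def, ← hw_def]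
    rw [norm_div, habs_den, norm_sub_rev]
    exact div_self hne
  -- continuity of G at ζ
  have hFcont : ContinuousAt F ζ := by
    have hd : (1 : ℂ) - (starRingEnd ℂ) a * (ζ * lam) ≠ 0 :=
      mob_denom_ne ha (by rw [norm_mul, hζ1, hlam1, mul_one])
    simp only [hF_def, mob]
    exact ContinuousAt.div (by fun_prop) (by fun_prop) hd
  have hGcont : ContinuousAt G ζ := by
    have hdne : (1 : ℂ) - ζ * (starRingEnd ℂ) (F ζ) ≠ 0 := by
      intro hcontra
      have : ‖1 - ζ * (starRingEnd ℂ) w‖ ≠ 0 := by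
        have hww : w * (starRingEnd ℂ) w = 1 := by
          rw [Complex.mul_conj]; norm_cast; rw [← Complex.sq_norm, hw1]; norm_num
        have hden : (1 - ζ * (starRingEnd ℂ) w) = (starRingEnd ℂ) w * (w - ζ) := by
          linear_combination -hww
        rw [hden, norm_mul, Complex.norm_conj, hw1, one_mul, ne_eq, norm_eq_zero, sub_eq_zero]
        exact hwζ
      rw [← hw_def] at hcontra
      rw [hcontra] at this
      simp at this
    apply continuous_norm.continuousAt.comp
    apply ContinuousAt.div
    · exact continuousAt_id.sub hFcont
    · exact continuousAt_const.sub
        (continuousAt_id.mul ((Complex.continuous_conj.continuousAt).comp hFcont))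
    · exact hdne
  -- the image set and its bounds
  set S := ((fun z => ‖(z - ψ z) / (1 - z * (starRingEnd ℂ) (ψ z))‖) '' unitDisc)
    with hS_def
  have hub : ∀ x ∈ S, x ≤ 1 := by
    rintro x ⟨z, hz, rfl⟩
    have hz' : ‖z‖ < 1 := (hmem z).1 hz
    have hψz : ‖ψ z‖ < 1 := (hmem _).1 (hmψ hz)
    have hk := abs_key hz' hψz
    have hdenpos : 0 < ‖1 - z * (starRingEnd ℂ) (ψ z)‖ :=
      lt_of_le_of_lt (norm_nonneg _) hk
    show ‖(z - ψ z) / (1 - z * (starRingEnd ℂ) (ψ z))‖ ≤ 1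
    rw [norm_div, div_le_one hdenpos]
    exact hk.le
  have hbdd : BddAbove S := ⟨1, hub⟩
  have hSne : S.Nonempty := ⟨_, ⟨0, h0E, rfl⟩⟩
  apply le_antisymm
  · exact Real.sSup_le hub zero_le_one
  · by_contra hlt
    push_neg at hlt
    -- approach ζ radially
    have htend : Filter.Tendsto (fun r : ℝ => ((r : ℂ) * ζ)) (nhdsWithin 1 (Set.Iio 1)) (nhds ζ) := by
      have hc : Continuous (fun r : ℝ => ((r : ℂ) * ζ)) :=
        Complex.continuous_ofReal.mul continuous_const
      have h1 := hc.tendsto (1 : ℝ)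
      rw [Complex.ofReal_one, one_mul] at h1
      exact h1.mono_left nhdsWithin_le_nhds
    have hGt : Filter.Tendsto (fun r : ℝ => G ((r : ℂ) * ζ)) (nhdsWithin 1 (Set.Iio 1))
        (nhds 1) := by
      have := hGcont.tendsto.comp htend
      rwa [hGζ] at this
    have hev1 : ∀ᶠ r in nhdsWithin (1:ℝ) (Set.Iio (1:ℝ)), sSup S < G (((r:ℝ) : ℂ) * ζ) :=
      hGt.eventually (eventually_gt_nhds hlt)
    have hev2 : ∀ᶠ r in nhdsWithin (1:ℝ) (Set.Iio 1), (0:ℝ) < r :=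
      Filter.eventually_iff_exists_mem.mpr ⟨Set.Ioo 0 1,
        Ioo_mem_nhdsLT_of_mem (by constructor <;> norm_num), fun r hr => hr.1⟩
    have hev3 : ∀ᶠ r in nhdsWithin (1:ℝ) (Set.Iio 1), r < 1 :=
      eventually_mem_nhdsWithin.mono (fun r hr => hr)
    obtain ⟨r, hr1, hr0, hrlt⟩ := (hev1.and (hev2.and hev3)).exists
    have hrζE : ((r : ℂ) * ζ) ∈ unitDisc := by
      rw [hmem, norm_mul, hζ1, mul_one, Complex.norm_real, Real.norm_eq_abs, abs_of_pos hr0]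
      exact hrlt
    have hmemS : G ((r : ℂ) * ζ) ∈ S := by
      refine ⟨(r : ℂ) * ζ, hrζE, ?_⟩
      simp only [hG_def, hF_def]
      rw [hψ_eq _ hrζE]
    exact absurd (le_csSup hbdd hmemS) (not_le.mpr hr1)
end
end

section
/- Let d ∈ (0,1) and let ψ be a holomorphic automorphism of the unit disc E with no fixed points in E, satisfying ψ(−d) = d and (ψ'(−d))² = 1. Then ψ = h_c with c = −2d/(1+d²), where h_a(z) := (z − a)/(1 − conj(a)·z). -/
open Set Metric Complex

noncomputable section

/-- The Möbius automorphism `h_a(z) = (z - a)/(1 - conj(a)·z)` of the unit disc. -/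
def hMob (a z : ℂ) : ℂ := (z - a) / (1 - (starRingEnd ℂ) a * z)

lemma denom_ne {a z : ℂ} (ha : ‖a‖ < 1) (hz : ‖z‖ < 1) :
    1 - (starRingEnd ℂ) a * z ≠ 0 := by
  intro h
  have h1 : (starRingEnd ℂ) a * z = 1 := by linear_combination -h
  have h2 := congrArg norm h1
  rw [norm_mul, norm_one, Complex.norm_conj] at h2
  nlinarith [norm_nonneg a, norm_nonneg z]

lemma hMob_mem {a z : ℂ} (ha : ‖a‖ < 1) (hz : ‖z‖ < 1) :
    ‖hMob a z‖ < 1 := by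
  have hD := denom_ne ha hz
  have ha2 : Complex.normSq a < 1 := by
    rw [← Complex.sq_norm]; nlinarith [norm_nonneg a]
  have hz2 : Complex.normSq z < 1 := by
    rw [← Complex.sq_norm]; nlinarith [norm_nonneg z]
  have iden : Complex.normSq (1 - (starRingEnd ℂ) a * z) - Complex.normSq (z - a)
      = (1 - Complex.normSq a) * (1 - Complex.normSq z) := by
    simp only [Complex.normSq_apply, Complex.sub_re, Complex.sub_im, Complex.mul_re,
      Complex.mul_im, Complex.conj_re, Complex.conj_im, Complex.one_re, Complex.one_im]
    ring
  have key : Complex.normSq (z - a) < Complex.normSq (1 - (starRingEnd ℂ) a * z) := by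
    nlinarith [mul_pos (sub_pos.2 ha2) (sub_pos.2 hz2)]
  rw [hMob, norm_div, div_lt_one (norm_pos_iff.2 hD)]
  rw [Complex.norm_def, Complex.norm_def]
  exact Real.sqrt_lt_sqrt (Complex.normSq_nonneg _) key

lemma hMob_zero (a : ℂ) : hMob a 0 = -a := by simp [hMob]

lemma hMob_self (a : ℂ) : hMob a a = 0 := by simp [hMob]

lemma hMob_inv {a z : ℂ} (ha : ‖a‖ < 1) (hz : ‖z‖ < 1) :
    hMob (-a) (hMob a z) = z := by
  have h1 := denom_ne ha hz
  have h3 : 1 - (starRingEnd ℂ) a * a ≠ 0 := denom_ne ha ha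
  have h3' : (1:ℂ) - a * (starRingEnd ℂ) a ≠ 0 := by rwa [mul_comm] at h3
  rw [hMob, hMob, map_neg]
  have h1' : 1 - z * (starRingEnd ℂ) a ≠ 0 := by rwa [mul_comm] at h1
  have h4' : 1 - z * (starRingEnd ℂ) a + (z - a) * (starRingEnd ℂ) a ≠ 0 := by
    intro h; exact h3 (by linear_combination h)
  simp only [sub_neg_eq_add, neg_mul]
  field_simp
  ring

lemma hMob_hasDerivAt {a z : ℂ} (h : 1 - (starRingEnd ℂ) a * z ≠ 0) :
    HasDerivAt (hMob a) ((1 - (starRingEnd ℂ) a * a) / (1 - (starRingEnd ℂ) a * z)^2) z := by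
  have h1 : HasDerivAt (fun w : ℂ => w - a) 1 z := (hasDerivAt_id z).sub_const a
  have h2 : HasDerivAt (fun w : ℂ => 1 - (starRingEnd ℂ) a * w) (-(starRingEnd ℂ) a) z := by
    simpa using ((hasDerivAt_id z).const_mul ((starRingEnd ℂ) a)).const_sub 1
  have := h1.div h2 h
  refine this.congr_deriv ?_
  field_simp
  ring

lemma hMob_double {d : ℝ} (w : ℂ)
    (hA : (1:ℂ) + (d:ℂ) * w ≠ 0)
    (hP : (1:ℂ) + (d:ℂ)^2 ≠ 0)
    (hS : (1:ℂ) + (d:ℂ)^2 + 2*d*w ≠ 0) :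
    hMob (-(d:ℂ)) (hMob (-(d:ℂ)) w) = hMob ((-(2 * d / (1 + d^2)) : ℝ) : ℂ) w := by
  simp only [hMob, map_neg, Complex.conj_ofReal]
  push_cast
  have hA' : (1:ℂ) + w * ↑d ≠ 0 := fun h => hA (by linear_combination h)
  have hB' : (1:ℂ) + w * ↑d + ↑d * (w + ↑d) ≠ 0 := fun h => hS (by linear_combination h)
  have hS' : (1:ℂ) + ↑d ^ 2 + w * ↑d * 2 ≠ 0 := fun h => hS (by linear_combination h)
  simp only [sub_neg_eq_add, neg_mul]
  field_simp
  ring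

/-- If `d ∈ (0,1)` and `ψ` is a fixed-point-free automorphism of the unit disc
with `ψ(-d) = d` and `(ψ'(-d))² = 1`, then `ψ = h_c` with `c = -2d/(1+d²)`. -/
theorem stmt14 (d : ℝ) (hd : d ∈ Set.Ioo (0 : ℝ) 1) (ψ : ℂ → ℂ) (hψ : IsDiscAut ψ)
    (hfix : ∀ z ∈ unitDisc, ψ z ≠ z)
    (hval : ψ (-(d : ℂ)) = (d : ℂ)) (hder : (deriv ψ (-(d : ℂ)))^2 = 1) :
    EqOn ψ (hMob ((-(2 * d / (1 + d^2)) : ℝ) : ℂ)) unitDisc := by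
  obtain ⟨hd0, hd1⟩ := hd
  obtain ⟨hdiff, hmaps, -⟩ := hψ
  have hopen : IsOpen unitDisc := Metric.isOpen_ball
  have hdd : ‖(d:ℂ)‖ < 1 := by rwa [Complex.norm_real, Real.norm_eq_abs, abs_of_pos hd0]
  have hndd : ‖(-(d:ℂ))‖ < 1 := by simpa using hdd
  have hdmem : ((d:ℂ)) ∈ unitDisc := mem_unitDisc.2 hdd
  have hndmem : (-(d:ℂ)) ∈ unitDisc := mem_unitDisc.2 hndd
  have h0mem : (0:ℂ) ∈ unitDisc := mem_unitDisc.2 (by simp)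
  set L := deriv ψ (-(d:ℂ)) with hLdef
  have Hψd : HasDerivAt ψ L (-(d:ℂ)) :=
    (hdiff.differentiableAt (hopen.mem_nhds hndmem)).hasDerivAt
  have hD0 : (1:ℂ) - (starRingEnd ℂ) (d:ℂ) * 0 ≠ 0 := denom_ne hdd (by simp)
  have hDd : (1:ℂ) - (starRingEnd ℂ) (d:ℂ) * d ≠ 0 := denom_ne hdd hdd
  have H0 : HasDerivAt (hMob (d:ℂ))
      ((1 - (starRingEnd ℂ) (d:ℂ) * d) / (1 - (starRingEnd ℂ) (d:ℂ) * 0)^2) 0 :=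
    hMob_hasDerivAt hD0
  have Hd : HasDerivAt (hMob (d:ℂ))
      ((1 - (starRingEnd ℂ) (d:ℂ) * d) / (1 - (starRingEnd ℂ) (d:ℂ) * d)^2) (d:ℂ) :=
    hMob_hasDerivAt hDd
  set G := fun z => hMob (d:ℂ) (ψ (hMob (d:ℂ) z)) with hGdef
  have Hψ0 : HasDerivAt ψ L (hMob (d:ℂ) 0) := by rw [hMob_zero]; exact Hψd
  have Hinner : HasDerivAt (fun z => ψ (hMob (d:ℂ) z))
      (L * ((1 - (starRingEnd ℂ) (d:ℂ) * d) / (1 - (starRingEnd ℂ) (d:ℂ) * 0)^2)) 0 :=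
    Hψ0.comp 0 H0
  have Hout : HasDerivAt (hMob (d:ℂ))
      ((1 - (starRingEnd ℂ) (d:ℂ) * d) / (1 - (starRingEnd ℂ) (d:ℂ) * d)^2)
      ((fun z => ψ (hMob (d:ℂ) z)) 0) := by
    simp only [hMob_zero, hval]
    exact Hd
  have HG : HasDerivAt G
      ((1 - (starRingEnd ℂ) (d:ℂ) * d) / (1 - (starRingEnd ℂ) (d:ℂ) * d)^2 *
        (L * ((1 - (starRingEnd ℂ) (d:ℂ) * d) / (1 - (starRingEnd ℂ) (d:ℂ) * 0)^2))) 0 :=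
    by rw [hGdef]; exact Hout.comp 0 Hinner
  have hone : (1:ℂ) - (d:ℂ) * d ≠ 0 := by
    intro h
    have : ((1 - d * d : ℝ) : ℂ) = 0 := by push_cast; linear_combination h
    rw [Complex.ofReal_eq_zero] at this
    nlinarith
  have hderivG : deriv G 0 = L := by
    rw [HG.deriv, Complex.conj_ofReal]
    have hone' : (1:ℂ) - (d:ℂ) ^ 2 ≠ 0 := by rwa [sq]
    field_simp
    ring
  have hmobDiff : DifferentiableOn ℂ (hMob (d:ℂ)) unitDisc := fun z hz =>
    ((hMob_hasDerivAt (denom_ne hdd (mem_unitDisc.1 hz))).differentiableAt).differentiableWithinAt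
  have hmobMaps : MapsTo (hMob (d:ℂ)) unitDisc unitDisc := fun z hz =>
    mem_unitDisc.2 (hMob_mem hdd (mem_unitDisc.1 hz))
  have hGdiff : DifferentiableOn ℂ G unitDisc :=
    (hmobDiff.comp (hdiff.comp hmobDiff hmobMaps) ((hmaps.comp hmobMaps)))
  have hGmaps : MapsTo G unitDisc unitDisc :=
    hmobMaps.comp (hmaps.comp hmobMaps)
  have hG0 : G 0 = 0 := by
    simp only [hGdef, hMob_zero, hval, hMob_self]
  have habsL : ‖L‖ = 1 := by
    have h2 : ‖L‖ ^ 2 = 1 := by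
      rw [← norm_pow, hder, norm_one]
    nlinarith [norm_nonneg L]
  have hmapsG' : MapsTo G (ball (0:ℂ) 1) (ball (G 0) 1) := by
    rw [hG0]; exact hGmaps
  have hdslope : ‖dslope G 0 0‖ = 1 / 1 := by
    rw [dslope_same, hderivG, habsL]; norm_num
  have hEq := affine_of_mapsTo_ball_of_exists_norm_dslope_eq_div
    (f := G) (c := 0) (R₁ := 1) (R₂ := 1) hGdiff (hmapsG'.mono_right ball_subset_closedBall) (mem_ball_self one_pos) hdslope
  have claim : ∀ w ∈ unitDisc, ψ w = hMob (-(d:ℂ)) (hMob (-(d:ℂ)) w * L) := by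
    intro w hw
    have hw' := mem_unitDisc.1 hw
    have hz : ‖hMob (-(d:ℂ)) w‖ < 1 := hMob_mem hndd hw'
    have hzd : hMob (d:ℂ) (hMob (-(d:ℂ)) w) = w := by
      have := hMob_inv (a := -(d:ℂ)) hndd hw'
      rwa [neg_neg] at this
    have hzmem : hMob (-(d:ℂ)) w ∈ ball (0:ℂ) 1 :=
      mem_ball_zero_iff.2 (by exact hz)
    have h := hEq hzmem
    simp only [hG0, dslope_same, hderivG, smul_eq_mul, zero_add, sub_zero] at h
    simp only [hGdef] at h
    rw [hzd] at h
    have hψw : ‖ψ w‖ < 1 := mem_unitDisc.1 (hmaps hw)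
    have hinv := hMob_inv (a := (d:ℂ)) hdd hψw
    rw [h] at hinv
    exact hinv.symm
  have hL : L = 1 ∨ L = -1 := by
    have h : (L - 1) * (L + 1) = 0 := by linear_combination hder
    rcases mul_eq_zero.1 h with h | h
    · left; linear_combination h
    · right; linear_combination h
  rcases hL with hL | hL
  · intro w hw
    have hw' := mem_unitDisc.1 hw
    rw [claim w hw, hL, mul_one]
    have hA : (1:ℂ) + (d:ℂ) * w ≠ 0 := by
      have := denom_ne hndd hw'
      rw [map_neg, Complex.conj_ofReal] at this
      intro h; exact this (by linear_combination h)
    have hP : (1:ℂ) + (d:ℂ)^2 ≠ 0 := by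
      intro h
      have : ((1 + d^2 : ℝ) : ℂ) = 0 := by push_cast; linear_combination h
      rw [Complex.ofReal_eq_zero] at this
      nlinarith
    have hS : (1:ℂ) + (d:ℂ)^2 + 2*d*w ≠ 0 := by
      intro h
      have h' : ((2*d : ℝ) : ℂ) * w = ((-(1 + d^2) : ℝ) : ℂ) := by
        push_cast; linear_combination h
      have h2 := congrArg norm h'
      rw [norm_mul, Complex.norm_real, Complex.norm_real, Real.norm_eq_abs, Real.norm_eq_abs] at h2
      rw [abs_of_pos (by positivity), abs_of_neg (by nlinarith), neg_neg] at h2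
      nlinarith [norm_nonneg w]
    exact hMob_double w hA hP hS
  · exfalso
    have h0 := claim 0 h0mem
    rw [hL, hMob_zero, neg_neg] at h0
    have he : ((d:ℂ)) * -1 = -(d:ℂ) := by ring
    rw [he, hMob_self] at h0
    exact hfix 0 h0mem h0
end
end
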